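/- arXiv:1201.5731 — 10 statements merged into one kernel-verified Lean document; each statement's English description precedes it below -/
import Mathlib

section
/- Let p be a prime with p ≡ 1 (mod 24) such that 2 is a fourth power modulo p, and suppose there exist integers a, b, c, d with p = a⁴ + 18b⁴ and 3p = c⁴ + 2d⁴. Then the elliptic curve E_p : y² = x³ + 18p²x over ℚ has rank at least 2; that is, there exist rational points P, Q of E_p such that for all integers m, n, if m•P + n•Q = 0 then m = 0 and n = 0. -/
/-- The elliptic curve `E_p : y² = x³ + 18p²x` over `ℚ`. -/
def Ep (p : ℕ) : WeierstrassCurve.Affine ℚ :=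
  { a₁ := 0, a₂ := 0, a₃ := 0, a₄ := 18 * (p : ℚ) ^ 2, a₆ := 0 }

namespace EpAux

open WeierstrassCurve.Affine

variable {p : ℕ}

lemma negY_eq (x y : ℚ) : (Ep p).negY x y = -y := by
  simp [WeierstrassCurve.Affine.negY, Ep]

lemma eqn_iff (x y : ℚ) :
    (Ep p).Equation x y ↔ y ^ 2 = x ^ 3 + 18 * (p : ℚ) ^ 2 * x := by
  rw [WeierstrassCurve.Affine.equation_iff]
  simp [Ep]

lemma y_eq_zero {x y : ℚ} (h : (Ep p).Equation x y) (hx : x = 0) : y = 0 := by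
  rw [eqn_iff] at h
  subst hx
  simpa [pow_eq_zero_iff] using h

lemma x_eq_zero {x y : ℚ} (h : (Ep p).Equation x y) (hy : y = 0) : x = 0 := by
  rw [eqn_iff] at h
  subst hy
  have h' : x * (x ^ 2 + 18 * (p : ℚ) ^ 2) = 0 := by linarith [h]
  rcases mul_eq_zero.mp h' with h'' | h''
  · exact h''
  · nlinarith [sq_nonneg x, sq_nonneg (p : ℚ)]

noncomputable def alp (p : ℕ) : (Ep p).Point → ℚ
  | .zero => 1
  | @WeierstrassCurve.Affine.Point.some _ _ _ x _ _ => if x = 0 then 18 * (p : ℚ) ^ 2 else x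

lemma alp_zero : alp p 0 = 1 := rfl

lemma alp_some {x y : ℚ} (h : (Ep p).Nonsingular x y) :
    alp p (.some _ _ h) = if x = 0 then 18 * (p : ℚ) ^ 2 else x := rfl

lemma alp_ne_zero (hp : 0 < p) (T : (Ep p).Point) : alp p T ≠ 0 := by
  cases T with
  | zero => exact one_ne_zero
  | @some x y h =>
    rw [alp_some]
    split
    · positivity
    · assumption

lemma eqn_of {x y : ℚ} (h : (Ep p).Nonsingular x y) :
    y ^ 2 = x ^ 3 + 18 * (p : ℚ) ^ 2 * x :=
  (eqn_iff x y).mp ((WeierstrassCurve.Affine.nonsingular_iff x y).mp h).1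

lemma key (hp : 0 < p) (A B : (Ep p).Point) :
    ∃ s : ℚ, s ≠ 0 ∧ alp p (A + B) * alp p A * alp p B = s ^ 2 := by
  have hn0 : (18 * (p : ℚ) ^ 2) ≠ 0 := by positivity
  cases A with
  | zero =>
    refine ⟨alp p B, alp_ne_zero hp B, ?_⟩
    rw [show (WeierstrassCurve.Affine.Point.zero : (Ep p).Point) = 0 from rfl, zero_add, alp_zero]
    ring
  | @some x₁ y₁ h₁ =>
    cases B with
    | zero =>
      refine ⟨alp p (.some _ _ h₁), alp_ne_zero hp _, ?_⟩
      rw [show (WeierstrassCurve.Affine.Point.zero : (Ep p).Point) = 0 from rfl, add_zero, alp_zero]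
      ring
    | @some x₂ y₂ h₂ =>
      have e₁ := eqn_of h₁
      have e₂ := eqn_of h₂
      by_cases hY : x₁ = x₂ ∧ y₁ = (Ep p).negY x₂ y₂
      · rw [WeierstrassCurve.Affine.Point.add_of_Y_eq hY.1 hY.2]
        refine ⟨alp p (.some _ _ h₁), alp_ne_zero hp _, ?_⟩
        have hBA : alp p (WeierstrassCurve.Affine.Point.some _ _ h₂) =
            alp p (WeierstrassCurve.Affine.Point.some _ _ h₁) := by
          rw [alp_some, alp_some, hY.1]
        rw [alp_zero, hBA]
        ring
      · push_neg at hY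
        rw [WeierstrassCurve.Affine.Point.add_some (fun h => hY h.1 h.2)]
        rw [alp_some (WeierstrassCurve.Affine.nonsingular_add h₁ h₂ (fun h => hY h.1 h.2))]
        by_cases hx : x₁ = x₂
        · -- doubling case
          subst hx
          have hy : y₁ ≠ -y₂ := by
            have := hY rfl; rwa [negY_eq] at this
          have hyy : y₁ = y₂ := by
            have hsq : (y₁ - y₂) * (y₁ + y₂) = 0 := by linear_combination e₁ - e₂
            rcases mul_eq_zero.mp hsq with h | h
            · linarith
            · exact absurd (by linarith : y₁ = -y₂) hy
          subst hyy
          have hy0 : y₁ ≠ 0 := fun h0 => hy (by rw [h0]; ring)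
          have hx0 : x₁ ≠ 0 := fun h0 => hy0 (y_eq_zero ((eqn_iff _ _).mpr e₁) h0)
          have hslope : (Ep p).slope x₁ x₁ y₁ y₁ =
              (3 * x₁ ^ 2 + 18 * (p : ℚ) ^ 2) / (2 * y₁) := by
            rw [WeierstrassCurve.Affine.slope_of_Y_ne rfl (hY rfl), negY_eq]
            simp [Ep]
            ring_nf
          have hx3 : (Ep p).addX x₁ x₁ ((Ep p).slope x₁ x₁ y₁ y₁) =
              ((x₁ ^ 2 - 18 * (p : ℚ) ^ 2) / (2 * y₁)) ^ 2 := by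
            rw [WeierstrassCurve.Affine.addX, hslope]
            simp only [Ep]
            field_simp
            linear_combination (-8 * x₁) * e₁
          by_cases hx30 : (Ep p).addX x₁ x₁ ((Ep p).slope x₁ x₁ y₁ y₁) = 0
          · have hnum : x₁ ^ 2 - 18 * (p : ℚ) ^ 2 = 0 := by
              rw [hx3] at hx30
              have := pow_eq_zero_iff (n := 2) (by norm_num) |>.mp hx30
              exact (div_eq_zero_iff.mp this).resolve_right (by
                intro h; exact hy0 (by simpa using h))
            refine ⟨18 * (p : ℚ) ^ 2, hn0, ?_⟩
            rw [alp_some, if_pos hx30, if_neg hx0]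
            linear_combination (18 * (p : ℚ) ^ 2) * hnum
          · refine ⟨(x₁ ^ 2 - 18 * (p : ℚ) ^ 2) / (2 * y₁) * x₁, ?_, ?_⟩
            · intro h
              rcases mul_eq_zero.mp h with h | h
              · exact hx30 (by rw [hx3, h]; ring)
              · exact hx0 h
            · rw [alp_some, if_neg hx30, if_neg hx0, hx3]
              ring
        · -- generic case
          have hslope : (Ep p).slope x₁ x₂ y₁ y₂ = (y₁ - y₂) / (x₁ - x₂) :=
            WeierstrassCurve.Affine.slope_of_X_ne hx
          have hsub : x₁ - x₂ ≠ 0 := sub_ne_zero.mpr hx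
          have hx3eq : (Ep p).addX x₁ x₂ ((Ep p).slope x₁ x₂ y₁ y₂) =
              ((y₁ - y₂) / (x₁ - x₂)) ^ 2 - x₁ - x₂ := by
            rw [WeierstrassCurve.Affine.addX, hslope]
            simp [Ep]
          by_cases h10 : x₁ = 0
          · have hy10 : y₁ = 0 := y_eq_zero ((eqn_iff _ _).mpr e₁) h10
            have h20 : x₂ ≠ 0 := fun h => hx (h10.trans h.symm)
            have hx3 : (Ep p).addX x₁ x₂ ((Ep p).slope x₁ x₂ y₁ y₂) =
                18 * (p : ℚ) ^ 2 / x₂ := by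
              rw [hx3eq, h10, hy10]
              field_simp
              linear_combination x₂ * e₂
            have hx30 : (Ep p).addX x₁ x₂ ((Ep p).slope x₁ x₂ y₁ y₂) ≠ 0 := by
              rw [hx3]; exact div_ne_zero hn0 h20
            refine ⟨18 * (p : ℚ) ^ 2, hn0, ?_⟩
            simp only [alp_some]
            rw [if_neg hx30, if_pos h10, if_neg h20, hx3]
            field_simp
          · by_cases h20 : x₂ = 0
            · have hy20 : y₂ = 0 := y_eq_zero ((eqn_iff _ _).mpr e₂) h20
              have hx3 : (Ep p).addX x₁ x₂ ((Ep p).slope x₁ x₂ y₁ y₂) =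
                  18 * (p : ℚ) ^ 2 / x₁ := by
                rw [hx3eq, h20, hy20]
                field_simp
                linear_combination x₁ * e₁
              have hx30 : (Ep p).addX x₁ x₂ ((Ep p).slope x₁ x₂ y₁ y₂) ≠ 0 := by
                rw [hx3]; exact div_ne_zero hn0 h10
              refine ⟨18 * (p : ℚ) ^ 2, hn0, ?_⟩
              simp only [alp_some]
              rw [if_neg hx30, if_neg h10, if_pos h20, hx3]
              field_simp
            · -- all x nonzero: Vieta
              have hV : x₁ * x₂ * ((Ep p).addX x₁ x₂ ((Ep p).slope x₁ x₂ y₁ y₂)) =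
                  ((y₂ * x₁ - y₁ * x₂) / (x₁ - x₂)) ^ 2 := by
                rw [hx3eq]
                field_simp
                linear_combination (x₂ * (x₁ - x₂)) * e₁ + (x₁ * (x₂ - x₁)) * e₂
              by_cases hx30 : (Ep p).addX x₁ x₂ ((Ep p).slope x₁ x₂ y₁ y₂) = 0
              · have hμ : y₂ * x₁ - y₁ * x₂ = 0 := by
                  have h0 : ((y₂ * x₁ - y₁ * x₂) / (x₁ - x₂)) ^ 2 = 0 := by
                    rw [← hV, hx30]; ring
                  have := pow_eq_zero_iff (n := 2) (by norm_num) |>.mp h0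
                  exact (div_eq_zero_iff.mp this).resolve_right (fun h => hsub h)
                have key2 : x₁ * x₂ * (x₂ - x₁) * (x₁ * x₂ - 18 * (p : ℚ) ^ 2) = 0 := by
                  linear_combination x₂ ^ 2 * e₁ - x₁ ^ 2 * e₂ + (y₁ * x₂ + y₂ * x₁) * hμ
                have hprod : x₁ * x₂ = 18 * (p : ℚ) ^ 2 := by
                  have h1 : x₁ * x₂ * (x₂ - x₁) ≠ 0 :=
                    mul_ne_zero (mul_ne_zero h10 h20) (sub_ne_zero.mpr (Ne.symm hx))
                  have := (mul_eq_zero.mp key2).resolve_left h1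
                  linarith [sub_eq_zero.mp this]
                refine ⟨18 * (p : ℚ) ^ 2, hn0, ?_⟩
                simp only [alp_some]
                rw [if_pos hx30, if_neg h10, if_neg h20]
                linear_combination (18 * (p : ℚ) ^ 2) * hprod
              · refine ⟨(y₂ * x₁ - y₁ * x₂) / (x₁ - x₂), ?_, ?_⟩
                · intro h
                  apply hx30
                  have : x₁ * x₂ * ((Ep p).addX x₁ x₂ ((Ep p).slope x₁ x₂ y₁ y₂)) = 0 := by
                    rw [hV, h]; ring
                  rcases mul_eq_zero.mp this with h' | h'
                  · exact absurd h' (mul_ne_zero h10 h20)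
                  · exact h'
                · simp only [alp_some]
                  rw [if_neg hx30, if_neg h10, if_neg h20]
                  linear_combination hV

noncomputable def Fv (q p : ℕ) (T : (Ep p).Point) : ZMod 2 :=
  ((padicValRat q (alp p T) : ℤ) : ZMod 2)

lemma Fv_add (q : ℕ) [Fact q.Prime] (hp : 0 < p) (A B : (Ep p).Point) :
    Fv q p (A + B) = Fv q p A + Fv q p B := by
  obtain ⟨s, hs, hsq⟩ := key hp A B
  have hA := alp_ne_zero hp A
  have hB := alp_ne_zero hp B
  have hAB := alp_ne_zero hp (A + B)
  have hv : padicValRat q (alp p (A + B) * alp p A * alp p B) = padicValRat q (s * s) := by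
    rw [hsq]; ring_nf
  rw [padicValRat.mul (mul_ne_zero hAB hA) hB, padicValRat.mul hAB hA,
    padicValRat.mul hs hs] at hv
  have h0 : ((padicValRat q (alp p (A + B)) + padicValRat q (alp p A) +
      padicValRat q (alp p B) : ℤ) : ZMod 2) = 0 := by
    rw [show padicValRat q (alp p (A + B)) + padicValRat q (alp p A) + padicValRat q (alp p B)
        = 2 * padicValRat q s from by linarith [hv]]
    push_cast
    rw [show (2 : ZMod 2) = 0 from by decide]
    ring
  push_cast at h0
  unfold Fv
  rw [add_assoc] at h0
  rw [eq_neg_of_add_eq_zero_left h0, neg_add, CharTwo.neg_eq, CharTwo.neg_eq]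

noncomputable def Fhom (q : ℕ) [Fact q.Prime] (p : ℕ) (hp : 0 < p) :
    (Ep p).Point →+ ZMod 2 :=
  AddMonoidHom.mk' (Fv q p) (fun A B => Fv_add q hp A B)

lemma Fhom_apply (q : ℕ) [Fact q.Prime] (hp : 0 < p) (T : (Ep p).Point) :
    Fhom q p hp T = Fv q p T := rfl

lemma Fv_some (q : ℕ) {x y : ℚ} (h : (Ep p).Nonsingular x y) (hx : x ≠ 0) :
    Fv q p (.some _ _ h) = ((padicValRat q x : ℤ) : ZMod 2) := by
  unfold Fv; rw [alp_some, if_neg hx]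

lemma par_mul_sq (q : ℕ) [Fact q.Prime] {u v : ℚ} (hu : u ≠ 0) (hv : v ≠ 0) :
    ((padicValRat q (u * v ^ 2) : ℤ) : ZMod 2) = ((padicValRat q u : ℤ) : ZMod 2) := by
  rw [padicValRat.mul hu (pow_ne_zero 2 hv), padicValRat.pow v]
  push_cast
  rw [show (2 : ZMod 2) = 0 from by decide]
  ring

lemma nonsing {x y : ℚ} (he : y ^ 2 = x ^ 3 + 18 * (p : ℚ) ^ 2 * x) (hy : y ≠ 0) :
    (Ep p).Nonsingular x y := by
  rw [WeierstrassCurve.Affine.nonsingular_iff]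
  refine ⟨(eqn_iff _ _).mpr he, Or.inr ?_⟩
  simp only [Ep]
  intro h
  apply hy
  norm_num at h
  linarith

lemma tt (hp : 0 < p) (T : (Ep p).Point) (h : T + T = 0) :
    T = 0 ∨ alp p T = 18 * (p : ℚ) ^ 2 := by
  cases T with
  | zero => left; rfl
  | @some x y h' =>
    by_cases hy : y = (Ep p).negY x y
    · right
      have hy0 : y = 0 := by rw [negY_eq] at hy; linarith
      have hx0 : x = 0 :=
        x_eq_zero ((WeierstrassCurve.Affine.nonsingular_iff x y).mp h').1 hy0
      rw [alp_some, if_pos hx0]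
    · exfalso
      rw [WeierstrassCurve.Affine.Point.add_self_of_Y_ne hy] at h
      exact WeierstrassCurve.Affine.Point.some_ne_zero _ h

end EpAux

open EpAux in
theorem rank_ge_two (p : ℕ) (hp : p.Prime) (h1 : p % 24 = 1)
    (h2 : ∃ x : ℤ, x ^ 4 ≡ 2 [ZMOD (p : ℤ)])
    (h3 : ∃ a b : ℤ, (p : ℤ) = a ^ 4 + 18 * b ^ 4)
    (h4 : ∃ c d : ℤ, 3 * (p : ℤ) = c ^ 4 + 2 * d ^ 4) :
    ∃ P Q : (Ep p).Point, ∀ m n : ℤ, m • P + n • Q = 0 → m = 0 ∧ n = 0 := by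
  clear h2
  obtain ⟨a, b, hab⟩ := h3
  obtain ⟨c, d, hcd⟩ := h4
  haveI hfp : Fact p.Prime := ⟨hp⟩
  have hp0 : 0 < p := hp.pos
  have hp1 : 1 < p := hp.one_lt
  have hp2 : p % 2 = 1 := by omega
  have hp3 : p % 3 = 1 := by omega
  have hnd2 : ¬ (2 ∣ p) := by omega
  have hnd3 : ¬ (3 ∣ p) := by omega
  have hpd3 : ¬ (p ∣ 3) := by
    intro h
    have := Nat.le_of_dvd (by norm_num) h
    interval_cases p <;> omega
  have hpd2 : ¬ (p ∣ 2) := by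
    intro h
    have := Nat.le_of_dvd (by norm_num) h
    interval_cases p <;> omega
  -- nonzeroness of a b c d
  have hane : a ≠ 0 := by
    rintro rfl
    have : ((2 : ℕ) : ℤ) ∣ (p : ℤ) := ⟨9 * b ^ 4, by rw [hab]; ring⟩
    exact hnd2 (by exact_mod_cast this)
  have hbne : b ≠ 0 := by
    rintro rfl
    have hpm : p = a.natAbs ^ 4 := by
      have := congrArg Int.natAbs hab
      simpa [Int.natAbs_pow] using this
    have hdvd : a.natAbs ∣ p := ⟨a.natAbs ^ 3, by rw [hpm]; ring⟩
    rcases hp.eq_one_or_self_of_dvd _ hdvd with h | h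
    · rw [h] at hpm; norm_num at hpm; omega
    · rw [h] at hpm
      have hlt : p ^ 1 < p ^ 4 := Nat.pow_lt_pow_right hp1 (by norm_num)
      rw [pow_one] at hlt
      omega
  have hcne : c ≠ 0 := by
    rintro rfl
    have : ((2 : ℕ) : ℤ) ∣ ((3 * p : ℕ) : ℤ) := ⟨d ^ 4, by push_cast; rw [hcd]; ring⟩
    have h2d : 2 ∣ 3 * p := by exact_mod_cast this
    omega
  have hdne : d ≠ 0 := by
    rintro rfl
    norm_num at hcd
    have h3c : (3 : ℤ) ∣ c := by
      refine Int.prime_three.dvd_of_dvd_pow (n := 4) ?_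
      exact ⟨(p : ℤ), by linarith⟩
    obtain ⟨e, rfl⟩ := h3c
    have hpe : (p : ℤ) = 27 * e ^ 4 := by nlinarith [hcd]
    have : ((3 : ℕ) : ℤ) ∣ (p : ℤ) := ⟨9 * e ^ 4, by rw [hpe]; ring⟩
    exact hnd3 (by exact_mod_cast this)
  -- rational versions
  have hpq : (p : ℚ) ≠ 0 := by positivity
  have haq : (a : ℚ) ≠ 0 := Int.cast_ne_zero.mpr hane
  have hbq : (b : ℚ) ≠ 0 := Int.cast_ne_zero.mpr hbne
  have hcq : (c : ℚ) ≠ 0 := Int.cast_ne_zero.mpr hcne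
  have hdq : (d : ℚ) ≠ 0 := Int.cast_ne_zero.mpr hdne
  have habQ : (p : ℚ) = (a : ℚ) ^ 4 + 18 * (b : ℚ) ^ 4 := by exact_mod_cast hab
  have hcdQ : 3 * (p : ℚ) = (c : ℚ) ^ 4 + 2 * (d : ℚ) ^ 4 := by exact_mod_cast hcd
  -- the points
  set xP : ℚ := (3 * (p : ℚ)) * ((c : ℚ) / (d : ℚ)) ^ 2 with hxP
  set yP : ℚ := 9 * (p : ℚ) ^ 2 * (c : ℚ) / (d : ℚ) ^ 3 with hyP
  set xQ : ℚ := ((p : ℚ)) * ((a : ℚ) / (b : ℚ)) ^ 2 with hxQ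
  set yQ : ℚ := (p : ℚ) ^ 2 * (a : ℚ) / (b : ℚ) ^ 3 with hyQ
  have hyPne : yP ≠ 0 := by
    rw [hyP]
    positivity
  have hyQne : yQ ≠ 0 := by
    rw [hyQ]
    positivity
  have hxPne : xP ≠ 0 := by
    rw [hxP]
    positivity
  have hxQne : xQ ≠ 0 := by
    rw [hxQ]
    positivity
  have hPns : (Ep p).Nonsingular xP yP := by
    apply nonsing _ hyPne
    rw [hxP, hyP]
    field_simp
    linear_combination 27 * hcdQ
  have hQns : (Ep p).Nonsingular xQ yQ := by
    apply nonsing _ hyQne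
    rw [hxQ, hyQ]
    field_simp
    linear_combination habQ
  refine ⟨.some _ _ hPns, .some _ _ hQns, ?_⟩
  -- valuation parities
  have h3pnat : (3 * (p : ℚ)) = ((3 * p : ℕ) : ℚ) := by push_cast; ring
  have hv3P : Fv 3 p (.some _ _ hPns) = 1 := by
    rw [Fv_some 3 hPns hxPne, hxP, par_mul_sq 3 (by positivity) (div_ne_zero hcq hdq),
      h3pnat, padicValRat.of_nat, padicValNat.mul (by norm_num) (by omega),
      padicValNat.self (by norm_num), padicValNat.eq_zero_of_not_dvd hnd3]
    rfl
  have hv3Q : Fv 3 p (.some _ _ hQns) = 0 := by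
    rw [Fv_some 3 hQns hxQne, hxQ, par_mul_sq 3 hpq (div_ne_zero haq hbq),
      padicValRat.of_nat, padicValNat.eq_zero_of_not_dvd hnd3]
    rfl
  have hvpP : Fv p p (.some _ _ hPns) = 1 := by
    rw [Fv_some p hPns hxPne, hxP, par_mul_sq p (by positivity) (div_ne_zero hcq hdq),
      h3pnat, padicValRat.of_nat, padicValNat.mul (by norm_num) (by omega),
      padicValNat.self hp1, padicValNat.eq_zero_of_not_dvd hpd3]
    rfl
  have hvpQ : Fv p p (.some _ _ hQns) = 1 := by
    rw [Fv_some p hQns hxQne, hxQ, par_mul_sq p hpq (div_ne_zero haq hbq),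
      padicValRat.of_nat, padicValNat.self hp1]
    rfl
  have hv2P : Fv 2 p (.some _ _ hPns) = 0 := by
    rw [Fv_some 2 hPns hxPne, hxP, par_mul_sq 2 (by positivity) (div_ne_zero hcq hdq),
      h3pnat, padicValRat.of_nat, padicValNat.eq_zero_of_not_dvd (by omega)]
    rfl
  have hv2Q : Fv 2 p (.some _ _ hQns) = 0 := by
    rw [Fv_some 2 hQns hxQne, hxQ, par_mul_sq 2 hpq (div_ne_zero haq hbq),
      padicValRat.of_nat, padicValNat.eq_zero_of_not_dvd hnd2]
    rfl
  have hv2n : ((padicValRat 2 (18 * (p : ℚ) ^ 2) : ℤ) : ZMod 2) = 1 := by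
    rw [show (18 * (p : ℚ) ^ 2) = (2 : ℚ) * (((3 * p : ℕ) : ℚ)) ^ 2 from by push_cast; ring,
      par_mul_sq 2 (by norm_num) (by positivity),
      show ((2 : ℚ)) = ((2 : ℕ) : ℚ) from by norm_num,
      padicValRat.of_nat, padicValNat.self (by norm_num)]
    rfl
  -- descent
  suffices H : ∀ k : ℕ, ∀ m n : ℤ, m.natAbs + n.natAbs ≤ k →
      m • (WeierstrassCurve.Affine.Point.some _ _ hPns) + n • (.some _ _ hQns) = 0 → m = 0 ∧ n = 0 by
    intro m n hmn
    exact H (m.natAbs + n.natAbs) m n le_rfl hmn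
  intro k
  induction k with
  | zero => intro m n hle _; omega
  | succ k ih =>
    intro m n hle h0
    have e3 := congrArg (Fhom 3 p hp0) h0
    rw [map_add, AddMonoidHom.map_zsmul, AddMonoidHom.map_zsmul, map_zero,
      Fhom_apply, Fhom_apply, hv3P, hv3Q] at e3
    have hm2 : (2 : ℤ) ∣ m := by
      refine (ZMod.intCast_zmod_eq_zero_iff_dvd m 2).mp ?_
      simpa [zsmul_eq_mul] using e3
    have ep := congrArg (Fhom p p hp0) h0
    rw [map_add, AddMonoidHom.map_zsmul, AddMonoidHom.map_zsmul, map_zero,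
      Fhom_apply, Fhom_apply, hvpP, hvpQ] at ep
    have hn2 : (2 : ℤ) ∣ n := by
      refine (ZMod.intCast_zmod_eq_zero_iff_dvd n 2).mp ?_
      have hm0 : ((m : ZMod 2)) = 0 := (ZMod.intCast_zmod_eq_zero_iff_dvd m 2).mpr hm2
      have := e3
      simp only [zsmul_eq_mul, mul_one] at ep
      rw [hm0] at ep
      simpa using ep
    obtain ⟨m', hm'⟩ := hm2
    obtain ⟨n', hn'⟩ := hn2
    set T := m' • (WeierstrassCurve.Affine.Point.some _ _ hPns) + n' • (.some _ _ hQns) with hT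
    have hTT : T + T = 0 := by
      rw [← h0, hm', hn', show (2 * m' : ℤ) = m' + m' from by ring,
        show (2 * n' : ℤ) = n' + n' from by ring, add_zsmul, add_zsmul, hT]
      abel
    rcases tt hp0 T hTT with hT0 | hTn
    · have := ih m' n' (by omega) (by rw [← hT]; exact hT0)
      omega
    · exfalso
      have hzero : Fhom 2 p hp0 T = 0 := by
        rw [hT, map_add, AddMonoidHom.map_zsmul, AddMonoidHom.map_zsmul,
          Fhom_apply, Fhom_apply, hv2P, hv2Q]
        simp
      have hone : Fhom 2 p hp0 T = 1 := by
        rw [Fhom_apply]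
        unfold EpAux.Fv
        rw [hTn, hv2n]
      rw [hzero] at hone
      exact one_ne_zero hone.symm
end

section
/- Let p be a prime with p ≠ 2 and p ≠ 3. Then there exist z, w in the field ℚ₂ of 2-adic numbers such that w² = 3 + 6p²z⁴. -/
open Polynomial

theorem C3_solvable_Q2 (p : ℕ) (hp : p.Prime) (hp2 : p ≠ 2) (hp3 : p ≠ 3) :
    ∃ z w : ℚ_[2], w ^ 2 = 3 + 6 * (p : ℚ_[2]) ^ 2 * z ^ 4 := by
  have hodd : Odd p := hp.odd_of_ne_two hp2
  obtain ⟨t, ht⟩ := hodd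
  set a : ℤ_[2] := 3 + 6 * (p : ℤ_[2]) ^ 2 with ha
  set F : Polynomial ℤ_[2] := X ^ 2 - C a with hF
  have heval : F.eval 1 = 1 - a := by simp [hF]
  have hderiv : F.derivative.eval 1 = 2 := by
    simp [hF]; norm_num
  have hkey : (1 : ℤ_[2]) - a = -(8 * ((3 * t ^ 2 + 3 * t + 1 : ℕ) : ℤ_[2])) := by
    have : (p : ℤ_[2]) = 2 * (t : ℤ_[2]) + 1 := by
      rw [ht]; push_cast; ring
    rw [ha, this]
    push_cast
    ring
  have hnorm : ‖F.eval 1‖ < ‖F.derivative.eval 1‖ ^ 2 := by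
    rw [heval, hderiv, hkey]
    have h8 : ‖(-(8 * ((3 * t ^ 2 + 3 * t + 1 : ℕ) : ℤ_[2])))‖ ≤ ‖(8 : ℤ_[2])‖ := by
      rw [norm_neg, norm_mul]
      calc ‖(8 : ℤ_[2])‖ * ‖((3 * t ^ 2 + 3 * t + 1 : ℕ) : ℤ_[2])‖
          ≤ ‖(8 : ℤ_[2])‖ * 1 := by
            gcongr; exact PadicInt.norm_le_one _
        _ = ‖(8 : ℤ_[2])‖ := mul_one _
    have h2v : ‖(2 : ℤ_[2])‖ = (1 / 2 : ℝ) := by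
      simpa using PadicInt.norm_p (p := 2)
    have h8v : ‖(8 : ℤ_[2])‖ = (1 / 8 : ℝ) := by
      have h83 : (8 : ℤ_[2]) = (2 : ℤ_[2]) ^ 3 := by norm_num
      rw [h83, norm_pow, h2v]
      norm_num
    calc ‖(-(8 * ((3 * t ^ 2 + 3 * t + 1 : ℕ) : ℤ_[2])))‖ ≤ 1 / 8 := h8v ▸ h8
      _ < (1 / 2) ^ 2 := by norm_num
      _ = ‖(2 : ℤ_[2])‖ ^ 2 := by rw [h2v]
  obtain ⟨z, hz, -, -, -⟩ := hensels_lemma hnorm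
  have hz2 : z ^ 2 = a := by
    have h : z ^ 2 - a = 0 := by simpa [hF] using hz
    exact sub_eq_zero.mp h
  refine ⟨1, (z : ℚ_[2]), ?_⟩
  have hc : ((z : ℚ_[2])) ^ 2 = 3 + 6 * (p : ℚ_[2]) ^ 2 := by
    have h := congrArg (fun x : ℤ_[2] => (x : ℚ_[2])) hz2
    simp only [ha] at h
    push_cast at h
    exact h
  rw [hc]; ring
end

section
/- Let p be a prime with p ≠ 2 and p ≠ 3. Then there exist z, w in the field ℚ₃ of 3-adic numbers such that w² = 3 + 6p²z⁴. -/
lemma sq_one_add_six (k : ℕ) : ∃ w : ℤ_[3], w ^ 2 = 1 + 6 * (k : ℤ_[3]) := by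
  set m : ℤ_[3] := 1 + 6 * (k : ℤ_[3]) with hm
  have hnorm : ‖(Polynomial.X ^ 2 - Polynomial.C m : Polynomial ℤ_[3]).eval 1‖ <
      ‖(Polynomial.X ^ 2 - Polynomial.C m : Polynomial ℤ_[3]).derivative.eval 1‖ ^ 2 := by
    have hd : (Polynomial.X ^ 2 - Polynomial.C m : Polynomial ℤ_[3]).derivative.eval 1 = 2 := by
      simp [Polynomial.derivative_sub]; norm_num
    have he : (Polynomial.X ^ 2 - Polynomial.C m : Polynomial ℤ_[3]).eval 1 = -(6 * k) := by
      simp [hm]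
    rw [hd, he]
    have h2 : ‖(2 : ℤ_[3])‖ = 1 := by
      have := (PadicInt.norm_int_lt_one_iff_dvd (p := 3) 2)
      have h2' : ¬ ((3:ℤ) ∣ 2) := by decide
      have : ¬ ‖((2:ℤ) : ℤ_[3])‖ < 1 := fun h => h2' (this.mp h)
      have hle := PadicInt.norm_le_one ((2:ℤ) : ℤ_[3])
      push_cast at this hle ⊢
      linarith [lt_or_eq_of_le hle]
    have h6 : ‖(-(6 * (k:ℤ_[3])))‖ < 1 := by
      rw [norm_neg, norm_mul]
      have : ‖(6 : ℤ_[3])‖ < 1 := by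
        have := (PadicInt.norm_int_lt_one_iff_dvd (p := 3) 6).mpr (by norm_num)
        push_cast at this; exact this
      calc ‖(6:ℤ_[3])‖ * ‖(k:ℤ_[3])‖ ≤ ‖(6:ℤ_[3])‖ * 1 := by
            gcongr; exact PadicInt.norm_le_one _
        _ < 1 := by simpa using this
    rw [h2]; simpa using h6
  obtain ⟨z, hz, -⟩ := hensels_lemma hnorm
  refine ⟨z, ?_⟩
  simp only [Polynomial.eval_sub, Polynomial.eval_pow, Polynomial.eval_X, Polynomial.eval_C,
    map_sub, map_pow, Polynomial.aeval_X, Polynomial.aeval_C, Algebra.algebraMap_self, RingHom.id_apply,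
    sub_eq_zero] at hz
  exact hz

lemma exists_z (p : ℕ) (hp3 : ¬ (3 ∣ p)) : ∃ z : ℕ, p ^ 2 * z ^ 4 % 9 = 1 := by
  have hmod : p % 3 ≠ 0 := fun h => hp3 (Nat.dvd_of_mod_eq_zero h)
  have h33 : p % 9 % 3 = p % 3 := Nat.mod_mod_of_dvd p (by norm_num)
  have hr : p % 9 = 1 ∨ p % 9 = 2 ∨ p % 9 = 4 ∨ p % 9 = 5 ∨ p % 9 = 7 ∨ p % 9 = 8 := by
    omega
  have key : ∀ z : ℕ, p ^ 2 * z ^ 4 % 9 = (p % 9) ^ 2 * z ^ 4 % 9 := fun z =>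
    Nat.ModEq.mul (((p.mod_modEq 9).symm).pow 2) Nat.ModEq.rfl
  rcases hr with h | h | h | h | h | h
  · exact ⟨1, by rw [key, h]; decide⟩
  · exact ⟨2, by rw [key, h]; decide⟩
  · exact ⟨4, by rw [key, h]; decide⟩
  · exact ⟨4, by rw [key, h]; decide⟩
  · exact ⟨2, by rw [key, h]; decide⟩
  · exact ⟨1, by rw [key, h]; decide⟩

theorem C3_solvable_Q3 (p : ℕ) (hp : p.Prime) (hp2 : p ≠ 2) (hp3 : p ≠ 3) :
    ∃ z w : ℚ_[3], w ^ 2 = 3 + 6 * (p : ℚ_[3]) ^ 2 * z ^ 4 := by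
  have h3 : ¬ (3 ∣ p) := fun h => hp3 ((Nat.prime_dvd_prime_iff_eq (by norm_num) hp).mp h).symm
  obtain ⟨z, hz⟩ := exists_z p h3
  obtain ⟨k, hk⟩ : ∃ k : ℕ, p ^ 2 * z ^ 4 = 9 * k + 1 := ⟨p ^ 2 * z ^ 4 / 9, by omega⟩
  obtain ⟨w₀, hw₀⟩ := sq_one_add_six k
  refine ⟨(z : ℚ_[3]), 3 * (w₀ : ℚ_[3]), ?_⟩
  have hw2 : ((w₀ : ℚ_[3]))^2 = 1 + 6 * (k : ℚ_[3]) := by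
    have := congrArg (fun x : ℤ_[3] => (x : ℚ_[3])) hw₀
    push_cast at this
    exact this
  have hk' : (p : ℚ_[3]) ^ 2 * (z : ℚ_[3]) ^ 4 = 9 * (k : ℚ_[3]) + 1 := by
    have := congrArg (fun n : ℕ => (n : ℚ_[3])) hk
    push_cast at this
    exact this
  linear_combination 9 * hw2 - 6 * hk'
end

section
/- Let p be a prime with p ≠ 2 and p ≠ 3. Then there exist z, w in the field ℚ_p of p-adic numbers with w² = 3 + 6p²z⁴ if and only if it is not the case that 3 is a quadratic non-residue modulo p and 2 is a quadratic residue modulo p. In particular, if 3 is a quadratic residue mod p, or if both 3 and 2 are quadratic non-residues mod p, the equation is solvable in ℚ_p; if 3 is a non-residue and 2 is a residue mod p, it is not. -/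
lemma myToZMod_eq_zero_iff {p : ℕ} [Fact p.Prime] (z : ℤ_[p]) :
    PadicInt.toZMod z = 0 ↔ ‖z‖ < 1 := by
  rw [← RingHom.mem_ker, PadicInt.ker_toZMod, PadicInt.maximalIdeal_eq_span_p,
    Ideal.mem_span_singleton, ← PadicInt.norm_lt_one_iff_dvd]

lemma myExistsSqrt {p : ℕ} [Fact p.Prime] (hp2 : p ≠ 2) (c : ℤ_[p])
    (hc : PadicInt.toZMod c ≠ 0) (hsq : IsSquare (PadicInt.toZMod c)) :
    ∃ w : ℤ_[p], w ^ 2 = c := by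
  obtain ⟨y, hy⟩ := hsq
  have hy0 : y ≠ 0 := by rintro rfl; simp at hy; exact hc hy
  set a : ℤ_[p] := ((y.val : ℕ) : ℤ_[p]) with ha
  have hya : PadicInt.toZMod a = y := by
    rw [ha, map_natCast]; exact ZMod.natCast_rightInverse y
  set F : Polynomial ℤ_[p] := Polynomial.X ^ 2 - Polynomial.C c with hF
  have hFa : F.eval a = a ^ 2 - c := by simp [hF]
  have hFd : F.derivative.eval a = 2 * a := by
    simp [hF, Polynomial.derivative_X_pow, one_add_one_eq_two]
  have h2a : PadicInt.toZMod (2 * a) ≠ 0 := by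
    rw [map_mul, hya]
    have h2 : (2 : ZMod p) ≠ 0 := by
      have : ((2:ℕ) : ZMod p) ≠ 0 := by
        rw [Ne, ZMod.natCast_eq_zero_iff]
        intro h
        exact hp2 ((Nat.prime_dvd_prime_iff_eq (Fact.out) Nat.prime_two).mp h)
      simpa using this
    simp only [map_ofNat]
    exact mul_ne_zero h2 hy0
  have hd1 : ‖F.derivative.eval a‖ = 1 := by
    rw [hFd]
    refine le_antisymm (PadicInt.norm_le_one _) ?_
    by_contra h
    push_neg at h
    exact h2a ((myToZMod_eq_zero_iff _).mpr h)
  have hnorm : ‖F.eval a‖ < ‖F.derivative.eval a‖ ^ 2 := by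
    rw [hd1, one_pow, hFa]
    rw [← myToZMod_eq_zero_iff]
    rw [map_sub, map_pow, hya, hy]; ring
  obtain ⟨z, hz, -⟩ := hensels_lemma hnorm
  refine ⟨z, ?_⟩
  have : z ^ 2 - c = 0 := by simpa [hF] using hz
  exact sub_eq_zero.mp this

lemma mySqModIff (p : ℕ) [Fact p.Prime] (a : ℤ) :
    (∃ x : ℤ, x ^ 2 ≡ a [ZMOD (p : ℤ)]) ↔ IsSquare ((a : ZMod p)) := by
  constructor
  · rintro ⟨x, hx⟩
    have h := (ZMod.intCast_eq_intCast_iff (x ^ 2) a p).mpr hx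
    push_cast at h
    exact ⟨(x : ZMod p), by rw [← h]; ring⟩
  · rintro ⟨y, hy⟩
    refine ⟨(y.val : ℤ), (ZMod.intCast_eq_intCast_iff _ _ _).mp ?_⟩
    push_cast
    rw [ZMod.natCast_rightInverse y, hy]
    ring


lemma myNatNeZero (p : ℕ) [hp : Fact p.Prime] (k : ℕ) (hk : ¬ p ∣ k) :
    ((k : ℕ) : ZMod p) ≠ 0 := by
  rw [Ne, ZMod.natCast_eq_zero_iff]; exact hk

lemma myNotDvd2 (p : ℕ) [hp : Fact p.Prime] (hp2 : p ≠ 2) : ¬ p ∣ 2 :=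
  fun h => hp2 ((Nat.prime_dvd_prime_iff_eq hp.out Nat.prime_two).mp h)

lemma myNotDvd3 (p : ℕ) [hp : Fact p.Prime] (hp3 : p ≠ 3) : ¬ p ∣ 3 :=
  fun h => hp3 ((Nat.prime_dvd_prime_iff_eq hp.out Nat.prime_three).mp h)

-- 6 square and 2 square implies 3 square
lemma mySix (p : ℕ) [hp : Fact p.Prime] (hp2 : p ≠ 2)
    (h6 : IsSquare (6 : ZMod p)) (h2 : IsSquare (2 : ZMod p)) :
    IsSquare (3 : ZMod p) := by
  obtain ⟨s, hs⟩ := h6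
  obtain ⟨b, hb⟩ := h2
  have hb0 : b ≠ 0 := by
    rintro rfl
    have : (2 : ZMod p) ≠ 0 := by
      have := myNatNeZero p 2 (myNotDvd2 p hp2); simpa using this
    simp at hb; exact this hb
  refine ⟨s * b⁻¹, ?_⟩
  have h2ne : (2 : ZMod p) ≠ 0 := by
    have := myNatNeZero p 2 (myNotDvd2 p hp2); simpa using this
  field_simp
  rw [sq, sq, ← hb]
  have : (3 : ZMod p) * 2 = 6 := by norm_num
  rw [this, hs]

-- both nonsquares implies 6 square
lemma mySix' (p : ℕ) [hp : Fact p.Prime] (hp2 : p ≠ 2) (hp3 : p ≠ 3)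
    (h3 : ¬ IsSquare (3 : ZMod p)) (h2 : ¬ IsSquare (2 : ZMod p)) :
    IsSquare (6 : ZMod p) := by
  have h2ne : (2 : ZMod p) ≠ 0 := by
    have := myNatNeZero p 2 (myNotDvd2 p hp2); simpa using this
  have h3ne : (3 : ZMod p) ≠ 0 := by
    have := myNatNeZero p 3 (myNotDvd3 p hp3); simpa using this
  have h6ne : (6 : ZMod p) ≠ 0 := by
    have h23 : (6 : ZMod p) = 2 * 3 := by norm_num
    rw [h23]; exact mul_ne_zero h2ne h3ne
  have c2 : quadraticChar (ZMod p) 2 = -1 := quadraticChar_neg_one_iff_not_isSquare.mpr h2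
  have c3 : quadraticChar (ZMod p) 3 = -1 := quadraticChar_neg_one_iff_not_isSquare.mpr h3
  have c6 : quadraticChar (ZMod p) 6 = 1 := by
    have h23 : (6 : ZMod p) = 2 * 3 := by norm_num
    rw [h23, map_mul, c2, c3]; norm_num
  exact (quadraticChar_one_iff_isSquare h6ne).mp c6

theorem C3_solvable_Qp_iff (p : ℕ) [Fact p.Prime] (hp2 : p ≠ 2) (hp3 : p ≠ 3) :
    (∃ z w : ℚ_[p], w ^ 2 = 3 + 6 * (p : ℚ_[p]) ^ 2 * z ^ 4) ↔
      ¬((¬∃ x : ℤ, x ^ 2 ≡ 3 [ZMOD (p : ℤ)]) ∧ (∃ x : ℤ, x ^ 2 ≡ 2 [ZMOD (p : ℤ)])) := by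
  have hppos : (0 : ℝ) < p := by exact_mod_cast (Fact.out : p.Prime).pos
  have hpQ : (p : ℚ_[p]) ≠ 0 := Nat.cast_ne_zero.mpr (Fact.out : p.Prime).ne_zero
  have hA3 : (∃ x : ℤ, x ^ 2 ≡ 3 [ZMOD (p : ℤ)]) ↔ IsSquare ((3 : ZMod p)) := by
    have := mySqModIff p 3; push_cast at this; exact this
  have hA2 : (∃ x : ℤ, x ^ 2 ≡ 2 [ZMOD (p : ℤ)]) ↔ IsSquare ((2 : ZMod p)) := by
    have := mySqModIff p 2; push_cast at this; exact this
  rw [hA3, hA2]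
  constructor
  · rintro ⟨z, w, h⟩ ⟨h3, h2⟩
    apply h3
    by_cases hz : ‖z‖ ≤ 1
    · -- w is integral, reduce mod p to get 3 square
      have hw : ‖w‖ ≤ 1 := by
        have h6 : ‖(6 : ℚ_[p]) * (p : ℚ_[p]) ^ 2 * z ^ 4‖ ≤ 1 := by
          rw [norm_mul, norm_mul, norm_pow, norm_pow]
          have hn6 : ‖(6 : ℚ_[p])‖ ≤ 1 := by
            have := Padic.norm_int_le_one (p := p) 6; push_cast at this; exact this
          have hnp : ‖(p : ℚ_[p])‖ ≤ 1 := by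
            rw [Padic.norm_p]
            rw [inv_le_one_iff₀]; right; exact_mod_cast (Fact.out : p.Prime).one_lt.le
          have e2 : ‖(p : ℚ_[p])‖ ^ 2 ≤ 1 := pow_le_one₀ (norm_nonneg _) hnp
          have e4 : ‖z‖ ^ 4 ≤ 1 := pow_le_one₀ (norm_nonneg _) hz
          exact mul_le_one₀ (mul_le_one₀ hn6 (by positivity) e2) (by positivity) e4
        have h3n : ‖(3 : ℚ_[p])‖ ≤ 1 := by
          have := Padic.norm_int_le_one (p := p) 3; push_cast at this; exact this
        have hsum : ‖w ^ 2‖ ≤ 1 := by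
          rw [h]; exact le_trans (Padic.nonarchimedean _ _) (max_le h3n h6)
        rw [norm_pow] at hsum
        nlinarith [norm_nonneg w]
      set W : ℤ_[p] := ⟨w, hw⟩ with hW
      set Z : ℤ_[p] := ⟨z, hz⟩ with hZ
      have hE : W ^ 2 = 3 + 6 * (p : ℤ_[p]) ^ 2 * Z ^ 4 := by
        apply Subtype.coe_injective
        push_cast
        exact h
      have := congrArg (PadicInt.toZMod) hE
      simp only [map_pow, map_add, map_mul, map_ofNat, map_natCast, ZMod.natCast_self] at this
      refine ⟨PadicInt.toZMod W, ?_⟩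
      rw [← sq]
      rw [this]; ring
    · -- z has negative valuation; get 6 square, combine with h2
      push_neg at hz
      have hz0 : z ≠ 0 := by
        intro h0; rw [h0, norm_zero] at hz; linarith
      have hzi : ‖z⁻¹‖ ≤ 1 := by
        rw [norm_inv]
        exact inv_le_one_of_one_le₀ hz.le
      set Zi : ℤ_[p] := ⟨z⁻¹, hzi⟩ with hZi
      have hZilt : ‖Zi‖ < 1 := by
        show ‖z⁻¹‖ < 1
        rw [norm_inv]
        exact inv_lt_one_of_one_lt₀ hz
      obtain ⟨T, hT⟩ := (PadicInt.norm_lt_one_iff_dvd _).mp hZilt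
      have hTQ : z⁻¹ = (p : ℚ_[p]) * (T : ℚ_[p]) := by
        have := congrArg (fun x : ℤ_[p] => (x : ℚ_[p])) hT
        push_cast at this
        exact this
      set s : ℚ_[p] := (p : ℚ_[p]) * z ^ 2 with hs
      have hs0 : s ≠ 0 := mul_ne_zero hpQ (pow_ne_zero _ hz0)
      have hsinv : s⁻¹ = (p : ℚ_[p]) * (T : ℚ_[p]) ^ 2 := by
        have e1 : s * ((p : ℚ_[p]) * (T : ℚ_[p]) ^ 2) = (z * ((p : ℚ_[p]) * (T:ℚ_[p]))) ^ 2 := by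
          rw [hs]; ring
        have e2 : s * ((p : ℚ_[p]) * (T : ℚ_[p]) ^ 2) = 1 := by
          rw [e1, ← hTQ, mul_inv_cancel₀ hz0, one_pow]
        exact inv_eq_of_mul_eq_one_right e2
      set u : ℚ_[p] := w * s⁻¹ with hu
      have hu2 : u ^ 2 = 3 * (s⁻¹) ^ 2 + 6 := by
        rw [hu, mul_pow, h]
        have h64 : 6 * (p : ℚ_[p]) ^ 2 * z ^ 4 = 6 * s ^ 2 := by rw [hs]; ring
        rw [h64]
        field_simp
      set R : ℤ_[p] := 3 * (p : ℤ_[p]) ^ 2 * T ^ 4 + 6 with hR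
      have hRQ : (R : ℚ_[p]) = 3 * (s⁻¹) ^ 2 + 6 := by
        rw [hsinv, hR]
        push_cast [show ((3:ℤ_[p]):ℚ_[p]) = 3 from rfl, show ((6:ℤ_[p]):ℚ_[p]) = 6 from rfl]
        ring
      have hunorm : ‖u‖ ≤ 1 := by
        have : ‖u ^ 2‖ ≤ 1 := by
          rw [hu2, ← hRQ, ← PadicInt.norm_def]
          exact PadicInt.norm_le_one R
        rw [norm_pow] at this
        nlinarith [norm_nonneg u]
      set U : ℤ_[p] := ⟨u, hunorm⟩ with hU
      have hE : U ^ 2 = R := by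
        apply Subtype.coe_injective
        show u ^ 2 = (R : ℚ_[p])
        rw [hu2, hRQ]
      have h6sq : IsSquare (6 : ZMod p) := by
        have := congrArg (PadicInt.toZMod) hE
        rw [hR] at this
        simp only [map_pow, map_add, map_mul, map_ofNat, map_natCast, ZMod.natCast_self] at this
        refine ⟨PadicInt.toZMod U, ?_⟩
        rw [← sq, this]; ring
      exact mySix p hp2 h6sq h2
  · intro h
    rw [not_and_or, not_not] at h
    by_cases h3 : IsSquare ((3 : ZMod p))
    · -- z = 0
      have hc : PadicInt.toZMod (3 : ℤ_[p]) ≠ 0 := by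
        rw [map_ofNat]
        have := myNatNeZero p 3 (myNotDvd3 p hp3); simpa using this
      have hsq : IsSquare (PadicInt.toZMod (3 : ℤ_[p])) := by rw [map_ofNat]; exact h3
      obtain ⟨w, hw⟩ := myExistsSqrt hp2 3 hc hsq
      refine ⟨0, (w : ℚ_[p]), ?_⟩
      have := congrArg (fun x : ℤ_[p] => (x : ℚ_[p])) hw
      push_cast [show ((3:ℤ_[p]):ℚ_[p]) = 3 from rfl] at this
      rw [this]; ring
    · have h2 : ¬ IsSquare ((2 : ZMod p)) := by tauto
      have h6 : IsSquare (6 : ZMod p) := mySix' p hp2 hp3 h3 h2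
      set c : ℤ_[p] := 3 * (p : ℤ_[p]) ^ 2 + 6 with hc
      have hcz : PadicInt.toZMod c = 6 := by
        rw [hc]
        simp only [map_add, map_mul, map_pow, map_ofNat, map_natCast, ZMod.natCast_self]
        ring
      have hcne : PadicInt.toZMod c ≠ 0 := by
        rw [hcz]
        have h2ne : (2 : ZMod p) ≠ 0 := by
          have := myNatNeZero p 2 (myNotDvd2 p hp2); simpa using this
        have h3ne : (3 : ZMod p) ≠ 0 := by
          have := myNatNeZero p 3 (myNotDvd3 p hp3); simpa using this
        have : (6 : ZMod p) = 2 * 3 := by norm_num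
        rw [this]; exact mul_ne_zero h2ne h3ne
      obtain ⟨u, hu⟩ := myExistsSqrt hp2 c (by rw [hcz] at *; exact hcne) (by rw [hcz]; exact h6)
      refine ⟨((p : ℚ_[p]))⁻¹, (u : ℚ_[p]) * ((p : ℚ_[p]))⁻¹, ?_⟩
      have huQ : (u : ℚ_[p]) ^ 2 = 3 * (p : ℚ_[p]) ^ 2 + 6 := by
        have := congrArg (fun x : ℤ_[p] => (x : ℚ_[p])) hu
        push_cast [hc, show ((3:ℤ_[p]):ℚ_[p]) = 3 from rfl,
          show ((6:ℤ_[p]):ℚ_[p]) = 6 from rfl] at this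
        exact this
      have h1 : (↑p : ℚ_[p]) * (↑p : ℚ_[p])⁻¹ = 1 := mul_inv_cancel₀ hpQ
      rw [mul_pow, huQ]
      linear_combination (3 * (↑p : ℚ_[p]) * ((↑p : ℚ_[p])⁻¹) + 3
        - 6 * (↑p : ℚ_[p]) * ((↑p : ℚ_[p])⁻¹) ^ 3 - 6 * ((↑p : ℚ_[p])⁻¹) ^ 2) * h1
end

section
/- Let p be a prime with p ≠ 2 and p ≠ 3. Then the equation w² = 3 + 6p²z⁴ has solutions z, w in each of the fields ℚ₂, ℚ₃ and ℚ_p if and only if p is not congruent to 7 or 17 modulo 24. -/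
open PadicInt Polynomial

-- square root via Hensel
lemma exists_sqrt {q : ℕ} [Fact q.Prime] (a b : ℤ_[q]) (h : ‖b ^ 2 - a‖ < ‖2 * b‖ ^ 2) :
    ∃ w : ℤ_[q], w ^ 2 = a := by
  have heval : (X ^ 2 - C a : Polynomial ℤ_[q]).eval b = b ^ 2 - a := by simp
  have hderiv : ((X ^ 2 - C a : Polynomial ℤ_[q]).derivative).eval b = 2 * b := by
    simp
    exact Or.inl one_add_one_eq_two
  obtain ⟨z, hz, -⟩ := hensels_lemma (F := X ^ 2 - C a) (a := b)
    (by rw [coe_aeval_eq_eval, heval, hderiv]; exact h)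
  exact ⟨z, by simpa [sub_eq_zero] using hz⟩

lemma toZMod_eq_zero_iff_norm_lt {q : ℕ} [Fact q.Prime] (x : ℤ_[q]) :
    toZMod x = 0 ↔ ‖x‖ < 1 := by
  rw [← RingHom.mem_ker, ker_toZMod, PadicInt.maximalIdeal_eq_span_p,
    Ideal.mem_span_singleton, ← norm_lt_one_iff_dvd]

lemma norm_eq_one_of_toZMod_ne {q : ℕ} [Fact q.Prime] (x : ℤ_[q]) (h : toZMod x ≠ 0) :
    ‖x‖ = 1 := by
  rcases lt_or_eq_of_le x.norm_le_one with h1 | h1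
  · exact absurd ((toZMod_eq_zero_iff_norm_lt x).mpr h1) h
  · exact h1

lemma exists_sqrt_of_zmod {q : ℕ} [Fact q.Prime] (hq2 : q ≠ 2) (a : ℤ_[q]) (r : ZMod q)
    (hr : r ≠ 0) (h : r * r = toZMod a) : ∃ w : ℤ_[q], w ^ 2 = a := by
  set b : ℤ_[q] := ((r.val : ℕ) : ℤ_[q]) with hb
  have htb : toZMod b = r := by
    rw [hb]; rw [map_natCast]; exact ZMod.natCast_rightInverse r
  apply exists_sqrt a b
  have h1 : ‖b ^ 2 - a‖ < 1 := by
    rw [← toZMod_eq_zero_iff_norm_lt]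
    simp [map_pow, htb, ← h, pow_two]
  have h2 : ‖2 * b‖ = 1 := by
    apply norm_eq_one_of_toZMod_ne
    rw [map_mul, htb]
    have h2q : (2 : ZMod q) ≠ 0 := by
      have : ((2 : ℕ) : ZMod q) ≠ 0 := by
        rw [Ne, ZMod.natCast_eq_zero_iff]
        intro hd
        have := Nat.le_of_dvd (by norm_num) hd
        have := (Fact.out : q.Prime).two_le
        omega
      simpa using this
    exact mul_ne_zero (by simpa [map_ofNat] using h2q) hr
  rw [h2, one_pow]; exact h1

lemma solvable_two (p : ℕ) (hp : p % 2 = 1) :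
    ∃ z w : ℚ_[2], w ^ 2 = 3 + 6 * (p : ℚ_[2]) ^ 2 * z ^ 4 := by
  have hpz : (p:ℤ) % 2 = 1 := by omega
  obtain ⟨k, hk⟩ : ∃ k : ℤ, (p:ℤ) = 2*k+1 := ⟨(p:ℤ)/2, by omega⟩
  obtain ⟨m, hm⟩ := Int.even_mul_succ_self k
  have hdvd : ((2:ℤ)^4) ∣ (9 - (3 + 6*(p:ℤ)^2)) := by
    refine ⟨-3*m, ?_⟩
    rw [hk]
    linear_combination (-24 : ℤ) * hm
  obtain ⟨w₀, hw₀⟩ : ∃ w : ℤ_[2], w ^ 2 = ((3 + 6*p^2 : ℕ) : ℤ_[2]) := by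
    apply exists_sqrt _ 3
    have h1 : (3:ℤ_[2]) ^ 2 - ((3 + 6*p^2 : ℕ) : ℤ_[2]) = ((9 - (3 + 6*(p:ℤ)^2) : ℤ) : ℤ_[2]) := by
      push_cast; ring
    have h2 : ‖(3:ℤ_[2]) ^ 2 - ((3 + 6*p^2 : ℕ) : ℤ_[2])‖ ≤ ((2:ℕ):ℝ) ^ (-(4:ℕ) : ℤ) := by
      rw [h1]
      exact (PadicInt.norm_int_le_pow_iff_dvd).mpr hdvd
    have h3 : ‖(2 * 3 : ℤ_[2])‖ = 2⁻¹ := by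
      have : (2*3 : ℤ_[2]) = ((2:ℕ) : ℤ_[2]) * 3 := by norm_num
      rw [this, norm_mul, PadicInt.norm_p, norm_eq_one_of_toZMod_ne 3 (by rw [map_ofNat]; decide)]
      norm_num
    calc ‖(3:ℤ_[2]) ^ 2 - ((3 + 6*p^2 : ℕ) : ℤ_[2])‖ ≤ ((2:ℕ):ℝ) ^ (-(4:ℕ) : ℤ) := h2
      _ < ‖(2*3 : ℤ_[2])‖ ^ 2 := by rw [h3]; norm_num
  refine ⟨1, (w₀ : ℚ_[2]), ?_⟩
  have h4 : ((w₀ : ℚ_[2])) ^ 2 = ((3 + 6*p^2 : ℕ) : ℚ_[2]) := by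
    exact_mod_cast congrArg (fun x : ℤ_[2] => (x : ℚ_[2])) hw₀
  rw [h4]; push_cast; ring

lemma solvable_three (p : ℕ) (hp : p % 3 ≠ 0) :
    ∃ z w : ℚ_[3], w ^ 2 = 3 + 6 * (p : ℚ_[3]) ^ 2 * z ^ 4 := by
  obtain ⟨c, hc⟩ : ∃ c : ℕ, (p ^ 2 * c ^ 4) % 9 = 1 := by
    have h9 : p % 9 = 1 ∨ p % 9 = 2 ∨ p % 9 = 4 ∨ p % 9 = 5 ∨ p % 9 = 7 ∨ p % 9 = 8 := by
      omega
    have key : ∀ c : ℕ, (p ^ 2 * c ^ 4) % 9 = ((p % 9) ^ 2 % 9 * (c ^ 4 % 9)) % 9 := by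
      intro c; rw [Nat.mul_mod, Nat.pow_mod]
    rcases h9 with h | h | h | h | h | h
    · exact ⟨1, by rw [key, h]; norm_num⟩
    · exact ⟨2, by rw [key, h]; norm_num⟩
    · exact ⟨4, by rw [key, h]; norm_num⟩
    · exact ⟨4, by rw [key, h]; norm_num⟩
    · exact ⟨2, by rw [key, h]; norm_num⟩
    · exact ⟨1, by rw [key, h]; norm_num⟩
  obtain ⟨M, hM, hM3⟩ : ∃ M : ℕ, 3 + 6 * (p ^ 2 * c ^ 4) = 9 * M ∧ M % 3 = 1 := by
    clear hp
    generalize p ^ 2 * c ^ 4 = x at hc ⊢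
    exact ⟨(3 + 6*x)/9, by omega, by omega⟩
  obtain ⟨v, hv⟩ : ∃ v : ℤ_[3], v ^ 2 = ((M : ℕ) : ℤ_[3]) := by
    apply exists_sqrt_of_zmod (by norm_num) _ 1 (by decide)
    rw [map_natCast, ← ZMod.natCast_mod M 3, hM3]
    decide
  refine ⟨(c : ℚ_[3]), 3 * (v : ℚ_[3]), ?_⟩
  have h4 : ((v : ℚ_[3])) ^ 2 = ((M : ℕ) : ℚ_[3]) := by
    exact_mod_cast congrArg (fun x : ℤ_[3] => (x : ℚ_[3])) hv
  have h5 : ((3:ℚ_[3]) + 6 * ((p:ℚ_[3]) ^ 2 * (c:ℚ_[3]) ^ 4)) = 9 * (M : ℚ_[3]) := by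
    exact_mod_cast congrArg (Nat.cast : ℕ → ℚ_[3]) hM
  rw [mul_pow, h4]
  push_cast
  linear_combination -h5

lemma cast_p_ne_zero (p : ℕ) [Fact p.Prime] : ((p : ℚ_[p]) : ℚ_[p]) ≠ 0 :=
  Nat.cast_ne_zero.mpr (Fact.out : p.Prime).pos.ne'

lemma solvable_p (p : ℕ) [Fact p.Prime] (hp2 : p ≠ 2) (hp3 : p ≠ 3)
    (h : IsSquare (3 : ZMod p) ∨ IsSquare (6 : ZMod p)) :
    ∃ z w : ℚ_[p], w ^ 2 = 3 + 6 * (p : ℚ_[p]) ^ 2 * z ^ 4 := by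
  have h2 : (2 : ZMod p) ≠ 0 := by
    have : ((2:ℕ) : ZMod p) ≠ 0 := by
      rw [Ne, ZMod.natCast_eq_zero_iff]
      exact fun hd => hp2 ((Nat.prime_dvd_prime_iff_eq Fact.out Nat.prime_two).mp hd)
    simpa using this
  have h3 : (3 : ZMod p) ≠ 0 := by
    have : ((3:ℕ) : ZMod p) ≠ 0 := by
      rw [Ne, ZMod.natCast_eq_zero_iff]
      exact fun hd => hp3 ((Nat.prime_dvd_prime_iff_eq Fact.out Nat.prime_three).mp hd)
    simpa using this
  rcases h with ⟨r, hr⟩ | ⟨r, hr⟩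
  · -- 3 is a square mod p
    have hr0 : r ≠ 0 := by rintro rfl; rw [mul_zero] at hr; exact h3 hr
    obtain ⟨w₀, hw₀⟩ : ∃ w : ℤ_[p], w ^ 2 = (3 : ℤ_[p]) := by
      apply exists_sqrt_of_zmod hp2 _ r hr0
      rw [← hr, map_ofNat]
    refine ⟨0, (w₀ : ℚ_[p]), ?_⟩
    have h4 : ((w₀ : ℚ_[p])) ^ 2 = (3 : ℚ_[p]) := by
      exact_mod_cast congrArg (fun x : ℤ_[p] => (x : ℚ_[p])) hw₀
    rw [h4]; ring
  · -- 6 is a square mod p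
    have h6 : (6 : ZMod p) ≠ 0 := by
      have : (6 : ZMod p) = 2 * 3 := by norm_num
      rw [this]; exact mul_ne_zero h2 h3
    have hr0 : r ≠ 0 := by rintro rfl; rw [mul_zero] at hr; exact h6 hr
    obtain ⟨w₀, hw₀⟩ : ∃ w : ℤ_[p], w ^ 2 = (6 + 3 * (p : ℤ_[p]) ^ 2) := by
      apply exists_sqrt_of_zmod hp2 _ r hr0
      rw [← hr, map_add, map_mul, map_pow, map_natCast, ZMod.natCast_self, map_ofNat, map_ofNat]
      ring
    have hp0 : (p : ℚ_[p]) ≠ 0 := cast_p_ne_zero p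
    refine ⟨((p : ℚ_[p]))⁻¹, (w₀ : ℚ_[p]) / (p : ℚ_[p]), ?_⟩
    have h4 : ((w₀ : ℚ_[p])) ^ 2 = 6 + 3 * (p : ℚ_[p]) ^ 2 := by
      exact_mod_cast congrArg (fun x : ℤ_[p] => (x : ℚ_[p])) hw₀
    field_simp
    linear_combination h4

lemma necessary (p : ℕ) [Fact p.Prime]
    (h : ∃ z w : ℚ_[p], w ^ 2 = 3 + 6 * (p : ℚ_[p]) ^ 2 * z ^ 4) :
    IsSquare (3 : ZMod p) ∨ IsSquare (6 : ZMod p) := by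
  obtain ⟨z, w, hw⟩ := h
  have hp1 : (1:ℝ) < (p:ℝ) := by exact_mod_cast (Fact.out : p.Prime).one_lt
  have hnp : ‖(p : ℚ_[p])‖ = ((p:ℝ))⁻¹ := Padic.norm_p
  have hn3 : ‖(3 : ℚ_[p])‖ ≤ 1 := by
    simpa using Padic.norm_int_le_one (p := p) 3
  have hn6 : ‖(6 : ℚ_[p])‖ ≤ 1 := by
    simpa using Padic.norm_int_le_one (p := p) 6
  by_cases hz : ‖z‖ ≤ 1
  · left
    have hwn : ‖w‖ ≤ 1 := by
      have h1 : ‖w‖ ^ 2 ≤ 1 := by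
        rw [← _root_.norm_pow, hw]
        refine le_trans (Padic.nonarchimedean _ _) (max_le hn3 ?_)
        rw [_root_.norm_mul, _root_.norm_mul, _root_.norm_pow, _root_.norm_pow, hnp]
        have : ((p:ℝ))⁻¹ ≤ 1 := by
          rw [inv_le_one_iff₀]; right; linarith
        calc ‖(6:ℚ_[p])‖ * ((p:ℝ))⁻¹ ^ 2 * ‖z‖ ^ 4
            ≤ 1 * 1 ^ 2 * 1 ^ 4 := by
              gcongr <;> try assumption
          _ = 1 := by norm_num
      nlinarith [norm_nonneg w]
    set W : ℤ_[p] := ⟨w, hwn⟩ with hW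
    set Z : ℤ_[p] := ⟨z, hz⟩ with hZ
    have hEq : W ^ 2 = 3 + 6 * (p : ℤ_[p]) ^ 2 * Z ^ 4 := by
      apply Subtype.ext
      push_cast
      exact hw
    have := congrArg toZMod hEq
    rw [map_pow, map_add, map_mul, map_mul, map_pow, map_pow, map_natCast,
      ZMod.natCast_self, map_ofNat, map_ofNat] at this
    refine ⟨toZMod W, ?_⟩
    rw [← pow_two, this]; ring
  · right
    push_neg at hz
    have hz0 : z ≠ 0 := by
      rintro rfl; rw [norm_zero] at hz; linarith
    -- ‖z‖ ≥ p
    have hzval : (p:ℝ) ≤ ‖z‖ := by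
      rw [Padic.norm_eq_zpow_neg_valuation hz0] at hz ⊢
      have hv : z.valuation ≤ -1 := by
        by_contra hcon
        push_neg at hcon
        have h1 : ((p:ℝ)) ^ (-z.valuation) ≤ (p:ℝ) ^ (0:ℤ) :=
          zpow_le_zpow_right₀ (le_of_lt hp1) (by omega)
        rw [zpow_zero] at h1; linarith
      calc (p:ℝ) = (p:ℝ) ^ (1:ℤ) := (zpow_one _).symm
        _ ≤ (p:ℝ) ^ (-z.valuation) := by
          apply zpow_le_zpow_right₀ (le_of_lt hp1); omega
    set T : ℚ_[p] := ((p : ℚ_[p]) * z ^ 2)⁻¹ with hTdef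
    have hp0 : (p : ℚ_[p]) ≠ 0 := cast_p_ne_zero p
    have hTnorm : ‖T‖ ≤ ((p:ℝ))⁻¹ := by
      rw [hTdef, _root_.norm_inv, _root_.norm_mul, _root_.norm_pow, hnp]
      rw [inv_le_inv₀]
      · calc (p:ℝ) = ((p:ℝ))⁻¹ * (p:ℝ)^2 := by field_simp
          _ ≤ ((p:ℝ))⁻¹ * ‖z‖^2 := by gcongr
      · positivity
      · have : (0:ℝ) < ‖z‖ := by positivity
        positivity
    have hT1 : ‖T‖ < 1 := lt_of_le_of_lt hTnorm (by rw [inv_lt_one_iff₀]; right; linarith)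
    have hWeq : (w * T) ^ 2 = 6 + 3 * T ^ 2 := by
      rw [hTdef]
      field_simp
      linear_combination hw
    have hWnorm : ‖w * T‖ ≤ 1 := by
      have h1 : ‖w * T‖ ^ 2 ≤ 1 := by
        rw [← _root_.norm_pow, hWeq]
        refine le_trans (Padic.nonarchimedean _ _) (max_le hn6 ?_)
        rw [_root_.norm_mul, _root_.norm_pow]
        have hT1' : ‖T‖ ≤ 1 := le_of_lt hT1
        calc ‖(3:ℚ_[p])‖ * ‖T‖ ^ 2 ≤ 1 * 1 ^ 2 := by gcongr
          _ = 1 := by norm_num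
      nlinarith [norm_nonneg (w * T)]
    set W : ℤ_[p] := ⟨w * T, hWnorm⟩ with hW
    set T' : ℤ_[p] := ⟨T, le_of_lt hT1⟩ with hT'
    have hEq : W ^ 2 = 6 + 3 * T' ^ 2 := by
      apply Subtype.ext
      push_cast
      exact hWeq
    have hT'z : toZMod T' = 0 := (toZMod_eq_zero_iff_norm_lt T').mpr hT1
    have := congrArg toZMod hEq
    rw [map_pow, map_add, map_mul, map_pow, hT'z, map_ofNat, map_ofNat] at this
    refine ⟨toZMod W, ?_⟩
    rw [← pow_two, this]; ring

lemma isSq_p_mod3 (p : ℕ) (h : p % 3 = 1) : IsSquare ((p : ℕ) : ZMod 3) := by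
  rw [← ZMod.natCast_mod, h]; decide

lemma notSq_p_mod3 (p : ℕ) (h : p % 3 = 2) : ¬IsSquare ((p : ℕ) : ZMod 3) := by
  rw [← ZMod.natCast_mod, h]; decide

lemma six_sq_of_not_not {p : ℕ} [Fact p.Prime] (hp2 : p ≠ 2)
    (h2 : ¬IsSquare (2 : ZMod p)) (h3 : ¬IsSquare (3 : ZMod p)) : IsSquare (6 : ZMod p) := by
  have hchar : ringChar (ZMod p) ≠ 2 := by
    rw [ZMod.ringChar_zmod_n]; exact hp2
  have q2 : quadraticChar (ZMod p) 2 = -1 := quadraticChar_neg_one_iff_not_isSquare.mpr h2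
  have q3 : quadraticChar (ZMod p) 3 = -1 := quadraticChar_neg_one_iff_not_isSquare.mpr h3
  have h6 : (6 : ZMod p) = 2 * 3 := by norm_num
  have q6 : quadraticChar (ZMod p) 6 = 1 := by
    rw [h6, map_mul, q2, q3]; ring
  have h60 : (6 : ZMod p) ≠ 0 := by
    intro h0
    rw [h0, quadraticChar_zero] at q6
    exact absurd q6 (by norm_num)
  exact (quadraticChar_one_iff_isSquare h60).mp q6

lemma not_six_sq {p : ℕ} [Fact p.Prime] (hp2 : p ≠ 2)
    (h2 : IsSquare (2 : ZMod p)) (h3 : ¬IsSquare (3 : ZMod p)) : ¬IsSquare (6 : ZMod p) := by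
  rintro ⟨s, hs⟩
  obtain ⟨r, hr⟩ := h2
  have h20 : (2 : ZMod p) ≠ 0 := by
    have : ((2:ℕ) : ZMod p) ≠ 0 := by
      rw [Ne, ZMod.natCast_eq_zero_iff]
      exact fun hd => hp2 ((Nat.prime_dvd_prime_iff_eq Fact.out Nat.prime_two).mp hd)
    simpa using this
  have hr0 : r ≠ 0 := by rintro rfl; rw [mul_zero] at hr; exact h20 hr
  apply h3
  refine ⟨s / r, ?_⟩
  field_simp
  have h32 : (3 : ZMod p) * 2 = 6 := by norm_num
  rw [pow_two, pow_two, ← hr, h32, hs]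

lemma zmod_criterion (p : ℕ) [Fact p.Prime] (hp2 : p ≠ 2) (hp3 : p ≠ 3) :
    (IsSquare (3 : ZMod p) ∨ IsSquare (6 : ZMod p)) ↔ ¬(p % 24 = 7 ∨ p % 24 = 17) := by
  haveI : Fact (Nat.Prime 3) := ⟨by norm_num⟩
  have hodd : p % 2 = 1 := Nat.odd_iff.mp ((Fact.out : p.Prime).odd_of_ne_two hp2)
  have h3m : p % 3 ≠ 0 := by
    intro h0
    exact hp3 ((Nat.prime_dvd_prime_iff_eq Nat.prime_three Fact.out).mp
      (Nat.dvd_of_mod_eq_zero h0)).symm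
  have hcast3 : ((3:ℕ) : ZMod p) = (3 : ZMod p) := by norm_cast
  have S2 := ZMod.exists_sq_eq_two_iff (p := p) hp2
  have S3one : p % 4 = 1 → (IsSquare (3 : ZMod p) ↔ IsSquare ((p:ℕ) : ZMod 3)) := by
    intro h4
    rw [← hcast3]
    exact ZMod.exists_sq_eq_prime_iff_of_mod_four_eq_one h4 (by norm_num)
  have S3three : p % 4 = 3 → (IsSquare (3 : ZMod p) ↔ ¬IsSquare ((p:ℕ) : ZMod 3)) := by
    intro h4
    rw [← hcast3]
    exact ZMod.exists_sq_eq_prime_iff_of_mod_four_eq_three h4 (by norm_num) hp3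
  have h24 : p % 24 = 1 ∨ p % 24 = 5 ∨ p % 24 = 7 ∨ p % 24 = 11 ∨ p % 24 = 13 ∨
      p % 24 = 17 ∨ p % 24 = 19 ∨ p % 24 = 23 := by omega
  constructor
  · rintro h (h7 | h7)
    · have hn3 : ¬IsSquare (3 : ZMod p) := by
        rw [S3three (by omega)]
        exact not_not_intro (isSq_p_mod3 p (by omega))
      have hn6 : ¬IsSquare (6 : ZMod p) :=
        not_six_sq hp2 (S2.mpr (by omega)) hn3
      rcases h with h | h
      · exact hn3 h
      · exact hn6 h
    · have hn3 : ¬IsSquare (3 : ZMod p) := by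
        rw [S3one (by omega)]
        exact notSq_p_mod3 p (by omega)
      have hn6 : ¬IsSquare (6 : ZMod p) :=
        not_six_sq hp2 (S2.mpr (by omega)) hn3
      rcases h with h | h
      · exact hn3 h
      · exact hn6 h
  · intro hn
    have h24' : p % 24 = 1 ∨ p % 24 = 5 ∨ p % 24 = 11 ∨ p % 24 = 13 ∨
        p % 24 = 19 ∨ p % 24 = 23 := by omega
    rcases h24' with h | h | h | h | h | h
    · exact Or.inl ((S3one (by omega)).mpr (isSq_p_mod3 p (by omega)))
    · refine Or.inr (six_sq_of_not_not hp2 ?_ ?_)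
      · rw [S2]; omega
      · rw [S3one (by omega)]; exact notSq_p_mod3 p (by omega)
    · exact Or.inl ((S3three (by omega)).mpr (notSq_p_mod3 p (by omega)))
    · exact Or.inl ((S3one (by omega)).mpr (isSq_p_mod3 p (by omega)))
    · refine Or.inr (six_sq_of_not_not hp2 ?_ ?_)
      · rw [S2]; omega
      · rw [S3three (by omega)]; exact not_not_intro (isSq_p_mod3 p (by omega))
    · exact Or.inl ((S3three (by omega)).mpr (notSq_p_mod3 p (by omega)))


theorem C3_locally_solvable_iff (p : ℕ) [Fact p.Prime] (hp2 : p ≠ 2) (hp3 : p ≠ 3) :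
    ((∃ z w : ℚ_[2], w ^ 2 = 3 + 6 * (p : ℚ_[2]) ^ 2 * z ^ 4) ∧
      (∃ z w : ℚ_[3], w ^ 2 = 3 + 6 * (p : ℚ_[3]) ^ 2 * z ^ 4) ∧
      (∃ z w : ℚ_[p], w ^ 2 = 3 + 6 * (p : ℚ_[p]) ^ 2 * z ^ 4)) ↔
      ¬(p % 24 = 7 ∨ p % 24 = 17) := by
  have hodd : p % 2 = 1 := Nat.odd_iff.mp ((Fact.out : p.Prime).odd_of_ne_two hp2)
  have h3m : p % 3 ≠ 0 := by
    intro h0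
    exact hp3 ((Nat.prime_dvd_prime_iff_eq Nat.prime_three Fact.out).mp
      (Nat.dvd_of_mod_eq_zero h0)).symm
  constructor
  · rintro ⟨-, -, hsol⟩
    exact (zmod_criterion p hp2 hp3).mp (necessary p hsol)
  · intro hn
    exact ⟨solvable_two p hodd, solvable_three p h3m,
      solvable_p p hp2 hp3 ((zmod_criterion p hp2 hp3).mpr hn)⟩
end

section
/- Let p be a prime with p ≠ 2 and p ≠ 3. Then there exist z, w in the field ℚ₂ of 2-adic numbers with w² = p + 18pz⁴ if and only if p ≡ 1 (mod 8) or p ≡ 3 (mod 8). -/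
open Polynomial in
lemma sqrt_exists_Q2 (n : ℕ) (hn : n % 8 = 1) : ∃ w : ℚ_[2], w ^ 2 = (n : ℚ_[2]) := by
  have h8 : (8 : ℤ) ∣ (n : ℤ) - 1 := by omega
  obtain ⟨k, hk⟩ := h8
  set F : Polynomial ℤ_[2] := X ^ 2 - C (n : ℤ_[2]) with hF
  have heval : F.eval 1 = 1 - (n : ℤ_[2]) := by simp [hF]
  have hderiv : F.derivative.eval 1 = 2 := by simp [hF, Polynomial.derivative_sub]; norm_num
  have h2 : ‖(2 : ℤ_[2])‖ = (2:ℝ)⁻¹ := by exact_mod_cast PadicInt.norm_p (p := 2)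
  have hnorm1 : ‖F.eval 1‖ ≤ (8:ℝ)⁻¹ := by
    rw [heval]
    have heq : (1 : ℤ_[2]) - (n : ℤ_[2]) = -((2:ℤ_[2])^3 * (k : ℤ_[2])) := by
      have := congrArg (fun x : ℤ => (x : ℤ_[2])) hk
      push_cast at this
      linear_combination -this
    rw [heq, norm_neg, norm_mul, norm_pow, h2]
    calc ((2:ℝ)⁻¹)^3 * ‖(k : ℤ_[2])‖ ≤ ((2:ℝ)⁻¹)^3 * 1 :=
          mul_le_mul_of_nonneg_left (PadicInt.norm_le_one _) (by norm_num)
      _ = (8:ℝ)⁻¹ := by norm_num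
  have hlt : ‖F.eval 1‖ < ‖F.derivative.eval 1‖ ^ 2 := by
    rw [hderiv, h2]
    calc ‖F.eval 1‖ ≤ (8:ℝ)⁻¹ := hnorm1
      _ < ((2:ℝ)⁻¹) ^ 2 := by norm_num
  obtain ⟨z, hz, -⟩ := hensels_lemma hlt
  refine ⟨(z : ℚ_[2]), ?_⟩
  have hzn : z ^ 2 = (n : ℤ_[2]) := by
    have := hz
    simp only [hF, Polynomial.eval_sub, Polynomial.eval_pow, Polynomial.eval_X,
      Polynomial.eval_C, map_sub, map_pow, Polynomial.aeval_X, Polynomial.aeval_C,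
      Algebra.algebraMap_self_apply, sub_eq_zero] at this
    exact this
  calc (z : ℚ_[2]) ^ 2 = ((z ^ 2 : ℤ_[2]) : ℚ_[2]) := by push_cast; ring
    _ = (n : ℚ_[2]) := by rw [hzn]; push_cast; ring

lemma key_mod32 : ∀ c a b : ZMod (2^5), c.val % 2 = 1 → b^2 = c + 18*c*a^4 →
    c.val % 8 = 1 ∨ c.val % 8 = 3 := by decide

theorem Cp_solvable_Q2_iff (p : ℕ) (hp : p.Prime) (hp2 : p ≠ 2) (hp3 : p ≠ 3) :
    (∃ z w : ℚ_[2], w ^ 2 = (p : ℚ_[2]) + 18 * (p : ℚ_[2]) * z ^ 4) ↔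
      (p % 8 = 1 ∨ p % 8 = 3) := by
  have hpodd : p % 2 = 1 := Nat.odd_iff.mp (hp.odd_of_ne_two hp2)
  constructor
  · rintro ⟨z, w, heq⟩
    -- basic norm facts
    have hpdvd : ¬ ((2:ℤ) ∣ (p:ℤ)) := by omega
    have hpcast : ((p : ℤ) : ℚ_[2]) = (p : ℚ_[2]) := by push_cast; ring
    have hpnorm : ‖(p : ℚ_[2])‖ = 1 := by
      refine le_antisymm (by rw [← hpcast]; exact Padic.norm_int_le_one _) ?_
      by_contra h
      push_neg at h
      rw [← hpcast] at h
      exact hpdvd (Padic.norm_intCast_lt_one_iff.mp h)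
    have hpne : (p : ℚ_[2]) ≠ 0 := by
      intro h; rw [h, norm_zero] at hpnorm; norm_num at hpnorm
    by_cases hz : ‖z‖ ≤ 1
    · -- integral case: reduce mod 32
      have h18p : ‖18 * (p : ℚ_[2]) * z ^ 4‖ ≤ 1 := by
        rw [norm_mul, norm_mul, norm_pow, hpnorm]
        have h18 : ‖(18 : ℚ_[2])‖ ≤ 1 := by
          have : ((18 : ℤ) : ℚ_[2]) = (18 : ℚ_[2]) := by push_cast; ring
          rw [← this]; exact Padic.norm_int_le_one _
        have h4 : ‖z‖ ^ 4 ≤ 1 := pow_le_one₀ (norm_nonneg _) hz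
        nlinarith [norm_nonneg (18 : ℚ_[2]), norm_nonneg z, pow_nonneg (norm_nonneg z) 4]
      have hw : ‖w‖ ≤ 1 := by
        have hsq : ‖w‖ ^ 2 ≤ 1 := by
          rw [← norm_pow, heq]
          calc ‖(p : ℚ_[2]) + 18 * (p : ℚ_[2]) * z ^ 4‖
              ≤ max ‖(p : ℚ_[2])‖ ‖18 * (p : ℚ_[2]) * z ^ 4‖ := Padic.nonarchimedean _ _
            _ ≤ 1 := max_le (le_of_eq hpnorm) h18p
        exact (pow_le_one_iff_of_nonneg (norm_nonneg _) two_ne_zero).mp hsq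
      set Z : ℤ_[2] := ⟨z, hz⟩ with hZ
      set W : ℤ_[2] := ⟨w, hw⟩ with hW
      have hZW : W ^ 2 = (p : ℤ_[2]) + 18 * (p : ℤ_[2]) * Z ^ 4 := by
        apply Subtype.coe_injective
        push_cast
        exact heq
      have h32 := congrArg (PadicInt.toZModPow (p := 2) 5) hZW
      simp only [map_pow, map_add, map_mul, map_natCast, map_ofNat] at h32
      haveI : NeZero ((2:ℕ)^5) := ⟨by norm_num⟩
      have hval : ((p : ℕ) : ZMod (2^5)).val = p % 2^5 := ZMod.val_natCast (2^5) p
      have h25 : (2:ℕ)^5 = 32 := by norm_num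
      have hodd : ((p : ℕ) : ZMod (2^5)).val % 2 = 1 := by rw [hval, h25]; omega
      have hkey := key_mod32 ((p : ℕ) : ZMod (2^5)) (PadicInt.toZModPow 5 Z)
        (PadicInt.toZModPow 5 W) hodd h32
      rw [hval, h25] at hkey
      omega
    · -- non-integral case: valuation parity contradiction
      exfalso
      push_neg at hz
      have hz0 : z ≠ 0 := by
        intro h; rw [h, norm_zero] at hz; norm_num at hz
      have h2R : (1:ℝ) < (2:ℕ) := by norm_num
      have h2pos : (0:ℝ) < (2:ℕ) := by norm_num
      have h2ne1 : ((2:ℕ):ℝ) ≠ 1 := by norm_num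
      have hznorm : ‖z‖ = ((2:ℕ):ℝ) ^ (-z.valuation) := Padic.norm_eq_zpow_neg_valuation hz0
      have h18norm : ‖(18 : ℚ_[2])‖ = ((2:ℕ):ℝ) ^ (-1 : ℤ) := by
        have h9 : ‖(9 : ℚ_[2])‖ = 1 := by
          refine le_antisymm ?_ ?_
          · have : ((9 : ℤ) : ℚ_[2]) = (9 : ℚ_[2]) := by push_cast; ring
            rw [← this]; exact Padic.norm_int_le_one _
          · by_contra h
            push_neg at h
            have : ((9 : ℤ) : ℚ_[2]) = (9 : ℚ_[2]) := by push_cast; ring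
            rw [← this] at h
            have := (Padic.norm_intCast_lt_one_iff (k := 9)).mp h
            norm_num at this
        have h2Q : ((2:ℕ) : ℚ_[2]) = (2 : ℚ_[2]) := by norm_num
        have h18eq : (18 : ℚ_[2]) = 2 * 9 := by norm_num
        rw [h18eq, norm_mul, h9, mul_one, ← h2Q, Padic.norm_p, zpow_neg_one]
      have hbig : ‖18 * (p : ℚ_[2]) * z ^ 4‖ = ((2:ℕ):ℝ) ^ (-1 - 4 * z.valuation) := by
        rw [norm_mul, norm_mul, norm_pow, hpnorm, h18norm, hznorm, mul_one,
          ← zpow_natCast (((2:ℕ):ℝ) ^ (-z.valuation)) 4, ← zpow_mul, ← zpow_add₀ (ne_of_gt h2pos)]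
        ring_nf
      have hvzneg : z.valuation < 0 := by
        rw [hznorm] at hz
        have := (zpow_lt_zpow_iff_right₀ h2R).mp (by rw [← zpow_zero (((2:ℕ)):ℝ)] at hz; exact hz)
        omega
      have hmax : ‖(p : ℚ_[2]) + 18 * (p : ℚ_[2]) * z ^ 4‖ = ((2:ℕ):ℝ) ^ (-1 - 4 * z.valuation) := by
        have hne : ‖(p : ℚ_[2])‖ ≠ ‖18 * (p : ℚ_[2]) * z ^ 4‖ := by
          rw [hpnorm, hbig, ← zpow_zero (((2:ℕ)):ℝ)]
          intro h
          have := (zpow_right_inj₀ h2pos h2ne1).mp h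
          omega
        rw [Padic.add_eq_max_of_ne hne, hpnorm, hbig, ← zpow_zero (((2:ℕ)):ℝ)]
        refine max_eq_right (le_of_lt ((zpow_lt_zpow_iff_right₀ h2R).mpr (by omega)))
      have hw0 : w ≠ 0 := by
        intro h
        have h0 : (0:ℝ) = ((2:ℕ):ℝ) ^ (-1 - 4 * z.valuation) := by
          rw [← hmax, ← heq, h]
          simp
        exact (ne_of_gt (zpow_pos h2pos _)) h0.symm
      have hwnorm : ‖w ^ 2‖ = ((2:ℕ):ℝ) ^ (-(2 * w.valuation)) := by
        rw [norm_pow, Padic.norm_eq_zpow_neg_valuation hw0,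
          ← zpow_natCast (((2:ℕ):ℝ) ^ (-w.valuation)) 2, ← zpow_mul]
        ring_nf
      rw [heq, hmax] at hwnorm
      have := (zpow_right_inj₀ h2pos h2ne1).mp hwnorm.symm
      omega
  · intro hcase
    rcases hcase with h1 | h3
    · obtain ⟨w, hw⟩ := sqrt_exists_Q2 p h1
      exact ⟨0, w, by rw [hw]; ring⟩
    · have h19 : (19 * p) % 8 = 1 := by omega
      obtain ⟨w, hw⟩ := sqrt_exists_Q2 (19 * p) h19
      refine ⟨1, w, ?_⟩
      rw [hw]
      push_cast
      ring
end

section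
/- Let p be a prime with p ≠ 2 and p ≠ 3. Then there exist z, w in the field ℚ₃ of 3-adic numbers such that w² = p + 18pz⁴. -/
open Polynomial in
lemma sq_exists_of_close_one (c : ℤ_[3]) (h : ‖(1 : ℤ_[3]) - c‖ < 1) :
    ∃ s : ℤ_[3], s ^ 2 = c := by
  have h2 : ‖(2 : ℤ_[3])‖ = 1 := by
    have hle : ‖(2 : ℤ_[3])‖ ≤ 1 := PadicInt.norm_le_one _
    have hlt : ¬ ‖(2 : ℤ_[3])‖ < 1 := by
      rw [show (2 : ℤ_[3]) = ((2:ℤ) : ℤ_[3]) by norm_num,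
        PadicInt.norm_int_lt_one_iff_dvd]
      norm_num
    linarith [lt_or_eq_of_le hle |>.resolve_left hlt]
  set F : Polynomial ℤ_[3] := X ^ 2 - C c with hF
  have hev : F.eval 1 = 1 - c := by simp [hF]
  have hder : F.derivative.eval 1 = 2 := by
    simp [hF]
    norm_num
  have hnorm : ‖F.eval 1‖ < ‖F.derivative.eval 1‖ ^ 2 := by
    rw [hev, hder]
    rw [h2]; simpa using h
  obtain ⟨z, hz, -⟩ := hensels_lemma hnorm
  refine ⟨z, ?_⟩
  have := hz
  simp [hF, sub_eq_zero] at this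
  exact this

theorem Cp_solvable_Q3 (p : ℕ) (hp : p.Prime) (hp2 : p ≠ 2) (hp3 : p ≠ 3) :
    ∃ z w : ℚ_[3], w ^ 2 = (p : ℚ_[3]) + 18 * (p : ℚ_[3]) * z ^ 4 := by
  have h3 : ¬ ((3:ℤ) ∣ (p:ℤ)) := by
    intro h
    have := (Nat.prime_dvd_prime_iff_eq Nat.prime_three hp).mp (by exact_mod_cast h)
    exact hp3 this.symm
  have hmod : (p : ℤ) % 3 = 1 ∨ (p : ℤ) % 3 = 2 := by omega
  rcases hmod with hm | hm
  · -- p ≡ 1 mod 3: z = 0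
    obtain ⟨s, hs⟩ := sq_exists_of_close_one (p : ℤ_[3]) (by
      rw [show (1 : ℤ_[3]) - (p:ℤ_[3]) = ((1 - (p:ℤ) : ℤ) : ℤ_[3]) by push_cast; ring]
      rw [PadicInt.norm_int_lt_one_iff_dvd]
      omega)
    refine ⟨0, (s : ℚ_[3]), ?_⟩
    have : ((s ^ 2 : ℤ_[3]) : ℚ_[3]) = ((p : ℤ_[3]) : ℚ_[3]) := by exact_mod_cast congrArg _ hs
    push_cast at this
    simpa using this
  · -- p ≡ 2 mod 3: z = 1/3, w = s/3 with s² = 11p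
    obtain ⟨s, hs⟩ := sq_exists_of_close_one ((11 * p : ℕ) : ℤ_[3]) (by
      rw [show (1 : ℤ_[3]) - ((11 * p : ℕ):ℤ_[3]) = ((1 - 11 * (p:ℤ) : ℤ) : ℤ_[3]) by push_cast; ring]
      rw [PadicInt.norm_int_lt_one_iff_dvd]
      omega)
    refine ⟨(3 : ℚ_[3])⁻¹, (s : ℚ_[3]) / 3, ?_⟩
    have h30 : (3 : ℚ_[3]) ≠ 0 := by exact_mod_cast (by norm_num : (3:ℚ) ≠ 0)
    have hsq : ((s : ℚ_[3])) ^ 2 = 11 * (p : ℚ_[3]) := by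
      have : ((s ^ 2 : ℤ_[3]) : ℚ_[3]) = (((11 * p : ℕ) : ℤ_[3]) : ℚ_[3]) := by
        exact_mod_cast congrArg _ hs
      push_cast at this
      exact this.trans (by norm_cast)
    field_simp
    rw [hsq]
    ring
end

section
/- Let p be a prime with p ≡ 1 (mod 8). Then there exist z, w in the field ℚ_p of p-adic numbers with w² = p + 18pz⁴ if and only if −18 is a fourth power modulo p, i.e. there exists an integer x with x⁴ ≡ −18 (mod p). -/
private lemma padic_val_add_of_lt {p : ℕ} [Fact p.Prime] {x y : ℚ_[p]} (hx : x ≠ 0) (hy : y ≠ 0)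
    (hxy : x.valuation < y.valuation) :
    x + y ≠ 0 ∧ (x + y).valuation = x.valuation := by
  have hp1 : 1 < (p : ℝ) := by exact_mod_cast (Fact.out : p.Prime).one_lt
  have hnx : ‖x‖ = (p : ℝ) ^ (-x.valuation) := Padic.norm_eq_zpow_neg_valuation hx
  have hny : ‖y‖ = (p : ℝ) ^ (-y.valuation) := Padic.norm_eq_zpow_neg_valuation hy
  have hlt : ‖y‖ < ‖x‖ := by
    rw [hnx, hny]
    exact (zpow_lt_zpow_iff_right₀ hp1).mpr (by omega)
  have hmax : ‖x + y‖ = max ‖x‖ ‖y‖ := Padic.add_eq_max_of_ne (ne_of_gt hlt)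
  have hnxy : ‖x + y‖ = ‖x‖ := by rw [hmax, max_eq_left hlt.le]
  have hne : x + y ≠ 0 := by
    intro h0
    rw [h0, norm_zero] at hnxy
    exact hx (norm_eq_zero.mp hnxy.symm)
  refine ⟨hne, ?_⟩
  have := Padic.norm_eq_zpow_neg_valuation hne
  rw [hnxy, hnx] at this
  have := zpow_right_injective₀ (by linarith) (by linarith) this
  omega

private lemma padic_val_pow4 {p : ℕ} [Fact p.Prime] {x : ℚ_[p]} (hx : x ≠ 0) :
    (x ^ 4).valuation = 4 * x.valuation := by
  have h2 : x * x ≠ 0 := mul_ne_zero hx hx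
  have : x ^ 4 = x * x * (x * x) := by ring
  rw [this, Padic.valuation_mul h2 h2, Padic.valuation_mul hx hx]; ring

private lemma exists_int_inv (p : ℕ) [Fact p.Prime] (a : ℤ) (ha : ¬ (p : ℤ) ∣ a) :
    ∃ b : ℤ, (p : ℤ) ∣ a * b - 1 := by
  have h0 : (a : ZMod p) ≠ 0 := by rwa [Ne, ZMod.intCast_zmod_eq_zero_iff_dvd]
  refine ⟨((((a : ZMod p)⁻¹ : ZMod p)).val : ℤ), ?_⟩
  rw [← ZMod.intCast_zmod_eq_zero_iff_dvd]
  push_cast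
  rw [ZMod.natCast_val, ZMod.cast_id, mul_inv_cancel₀ h0, sub_self]

private lemma key_int (p : ℕ) [Fact p.Prime] (h8 : p % 8 = 1) (x : ℤ)
    (hx : (p : ℤ) ∣ x ^ 4 + 18) : ∃ z N : ℤ, 1 + 18 * z ^ 4 = p + p ^ 2 * N := by
  have hp : p.Prime := Fact.out
  have hPZ : Prime (p : ℤ) := Nat.prime_iff_prime_int.mp hp
  have hp18 : ¬ (p : ℤ) ∣ 18 := by
    intro hd
    have hd' : p ∣ 18 := by exact_mod_cast hd
    have h1 := Nat.le_of_dvd (by norm_num) hd'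
    have h2 := hp.two_le
    interval_cases p <;> first | omega | exact absurd hp (by norm_num)
  have hpx : ¬ (p : ℤ) ∣ x := by
    intro hd
    have h4 : (p : ℤ) ∣ x ^ 4 := hd.pow (by norm_num)
    exact hp18 (by simpa using dvd_sub hx h4)
  obtain ⟨c, hc⟩ := exists_int_inv p x hpx
  have h18c : (p : ℤ) ∣ 18 * c ^ 4 + 1 := by
    have h1 : (p : ℤ) ∣ c ^ 4 * (x ^ 4 + 18) := hx.mul_left _
    have h2 : (p : ℤ) ∣ ((x * c) ^ 3 + (x * c) ^ 2 + x * c + 1) * (x * c - 1) := hc.mul_left _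
    have h3 := dvd_sub h1 h2
    have he : c ^ 4 * (x ^ 4 + 18) - ((x * c) ^ 3 + (x * c) ^ 2 + x * c + 1) * (x * c - 1)
        = 18 * c ^ 4 + 1 := by ring
    rwa [he] at h3
  obtain ⟨m, hm⟩ := h18c
  have hpc : ¬ (p : ℤ) ∣ c := by
    intro hd
    have h1 : (p : ℤ) ∣ 18 * c ^ 4 := (hd.pow (by norm_num)).mul_left 18
    have h2 : (p : ℤ) ∣ 1 := by
      have := dvd_sub ⟨m, hm⟩ h1
      simpa using this
    exact hPZ.not_dvd_one h2
  have hp72 : ¬ (p : ℤ) ∣ 72 * c ^ 3 := by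
    intro hd
    rcases (hPZ.dvd_mul).mp hd with hd' | hd'
    · apply hp18
      have hd'' : p ∣ 72 := by exact_mod_cast hd'
      have h1 : p ∣ 18 * 4 := by simpa using hd''
      rcases (Nat.Prime.dvd_mul hp).mp h1 with h' | h'
      · exact_mod_cast h'
      · have h2 : p ∣ 2 ^ 2 := by simpa using h'
        have h3 : p ∣ 2 := hp.dvd_of_dvd_pow h2
        exact_mod_cast h3.trans (by norm_num)
    · exact hpc (hPZ.dvd_of_dvd_pow hd')
  obtain ⟨e, he⟩ := exists_int_inv p _ hp72
  set d : ℤ := e * (1 - m) with hdd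
  have hd : (p : ℤ) ∣ 72 * c ^ 3 * d - (1 - m) := by
    have h1 : (p : ℤ) ∣ (72 * c ^ 3 * e - 1) * (1 - m) := he.mul_right _
    have h2 : (72 * c ^ 3 * e - 1) * (1 - m) = 72 * c ^ 3 * d - (1 - m) := by rw [hdd]; ring
    rwa [h2] at h1
  obtain ⟨j, hj⟩ := hd
  exact ⟨c + p * d, j + 18 * (6 * c ^ 2 * d ^ 2 + 4 * c * d ^ 3 * p + d ^ 4 * p ^ 2),
    by linear_combination hm + (p : ℤ) * hj⟩

private lemma exists_sqrt_one_add_p_mul (p : ℕ) [Fact p.Prime] (hp2 : p ≠ 2) (N : ℤ_[p]) :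
    ∃ s : ℤ_[p], s ^ 2 = 1 + p * N := by
  have hp : p.Prime := Fact.out
  set F : Polynomial ℤ_[p] := Polynomial.X ^ 2 - Polynomial.C (1 + p * N) with hF
  have heval : ∀ t : ℤ_[p], F.eval t = t ^ 2 - (1 + p * N) := by intro t; simp [hF]
  have hderiv : ∀ t : ℤ_[p], F.derivative.eval t = 2 * t := by
    intro t; simp [hF, Polynomial.derivative_X_pow, one_add_one_eq_two]
  have h2norm : ‖(2 : ℤ_[p])‖ = 1 := by
    have hd : ¬ (p : ℤ) ∣ 2 := by
      intro hd
      have h2' : p ∣ 2 := by exact_mod_cast hd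
      exact hp2 ((Nat.prime_dvd_prime_iff_eq hp Nat.prime_two).mp h2')
    have h1 : ‖((2 : ℤ) : ℤ_[p])‖ ≤ 1 := PadicInt.norm_le_one _
    have h2 : ¬ ‖((2 : ℤ) : ℤ_[p])‖ < 1 := by
      rw [PadicInt.norm_int_lt_one_iff_dvd]; exact hd
    have h3 : ‖((2 : ℤ) : ℤ_[p])‖ = 1 := le_antisymm h1 (not_lt.mp h2)
    simpa using h3
  have hnorm : ‖F.eval 1‖ < ‖F.derivative.eval 1‖ ^ 2 := by
    rw [heval, hderiv, mul_one, h2norm]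
    have h1 : (1 : ℤ_[p]) ^ 2 - (1 + p * N) = -(p * N) := by ring
    rw [h1, norm_neg]
    calc ‖(p : ℤ_[p]) * N‖ ≤ ‖(p : ℤ_[p])‖ * 1 := by
          rw [norm_mul]
          exact mul_le_mul_of_nonneg_left (PadicInt.norm_le_one N) (norm_nonneg _)
      _ = ((p : ℝ))⁻¹ := by rw [mul_one, PadicInt.norm_p]
      _ < 1 ^ 2 := by
          rw [one_pow, inv_lt_one_iff₀]
          right; exact_mod_cast hp.one_lt
  obtain ⟨s, hs, -⟩ := hensels_lemma hnorm
  rw [Polynomial.coe_aeval_eq_eval, heval] at hs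
  exact ⟨s, by linear_combination hs⟩

theorem Cp_solvable_Qp_iff_of_one_mod_eight (p : ℕ) [Fact p.Prime] (h : p % 8 = 1) :
    (∃ z w : ℚ_[p], w ^ 2 = (p : ℚ_[p]) + 18 * (p : ℚ_[p]) * z ^ 4) ↔
      ∃ x : ℤ, x ^ 4 ≡ -18 [ZMOD (p : ℤ)] := by
  have hp : p.Prime := Fact.out
  have hp1 : 1 < (p : ℝ) := by exact_mod_cast hp.one_lt
  have hp18 : ¬ p ∣ 18 := by
    intro hd
    have h1 := Nat.le_of_dvd (by norm_num) hd
    have h2 := hp.two_le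
    interval_cases p <;> first | omega | exact absurd hp (by norm_num)
  have hpQ : (p : ℚ_[p]) ≠ 0 := Nat.cast_ne_zero.mpr hp.ne_zero
  constructor
  · rintro ⟨z, w, hw⟩
    have hw' : w ^ 2 = (p : ℚ_[p]) * (1 + 18 * z ^ 4) := by rw [hw]; ring
    have hzmod : ∃ ζ : ZMod p, (1 : ZMod p) + 18 * ζ ^ 4 = 0 := by
      by_cases hz : ‖z‖ ≤ 1
      case neg =>
        exfalso
        push_neg at hz
        have hz0 : z ≠ 0 := by
          intro h0; rw [h0, norm_zero] at hz; linarith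
        have hvz : z.valuation < 0 := by
          have hn := Padic.norm_eq_zpow_neg_valuation hz0
          rw [hn] at hz
          have h0 : (p : ℝ) ^ (0 : ℤ) < (p : ℝ) ^ (-z.valuation) := by simpa using hz
          have := (zpow_lt_zpow_iff_right₀ hp1).mp h0
          omega
        have h18 : (18 : ℚ_[p]) ≠ 0 := by norm_num
        have hz4 : z ^ 4 ≠ 0 := pow_ne_zero _ hz0
        have h18z : (18 : ℚ_[p]) * z ^ 4 ≠ 0 := mul_ne_zero h18 hz4
        have hv18z : ((18 : ℚ_[p]) * z ^ 4).valuation = 4 * z.valuation := by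
          rw [Padic.valuation_mul h18 hz4, padic_val_pow4 hz0]
          have h180 : (18 : ℚ_[p]).valuation = 0 := by
            rw [Padic.valuation_ofNat, padicValNat.eq_zero_of_not_dvd hp18]
            simp
          rw [h180]; ring
        have hlt : ((18 : ℚ_[p]) * z ^ 4).valuation < (1 : ℚ_[p]).valuation := by
          rw [hv18z, Padic.valuation_one]; omega
        obtain ⟨hu0, hvu⟩ := padic_val_add_of_lt h18z one_ne_zero hlt
        have hu0' : (1 : ℚ_[p]) + 18 * z ^ 4 ≠ 0 := by rwa [add_comm] at hu0
        have hvu' : ((1 : ℚ_[p]) + 18 * z ^ 4).valuation = 4 * z.valuation := by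
          rw [add_comm, hvu, hv18z]
        have hw0 : w ≠ 0 := by
          intro h0
          rw [h0] at hw'
          simp only [ne_eq, zero_pow, OfNat.ofNat_ne_zero, not_false_eq_true] at hw'
          rcases mul_eq_zero.mp hw'.symm with h' | h'
          · exact hpQ h'
          · exact hu0' h'
        have e1 : (w ^ 2).valuation = 2 * w.valuation := by
          rw [pow_two, Padic.valuation_mul hw0 hw0]; ring
        have e2 : ((p : ℚ_[p]) * (1 + 18 * z ^ 4)).valuation
            = 1 + ((1 : ℚ_[p]) + 18 * z ^ 4).valuation := by
          rw [Padic.valuation_mul hpQ hu0', Padic.valuation_p]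
        rw [hw'] at e1
        rw [e2, hvu'] at e1
        omega
      case pos =>
        set z' : ℤ_[p] := ⟨z, hz⟩ with hz'
        set u' : ℤ_[p] := 1 + 18 * z' ^ 4 with hu'
        have hcoe : ((u' : ℤ_[p]) : ℚ_[p]) = 1 + 18 * z ^ 4 := by
          rw [hu']
          push_cast
          rfl
        refine ⟨PadicInt.toZMod z', ?_⟩
        have hker : PadicInt.toZMod u' = 0 → (1 : ZMod p) + 18 * (PadicInt.toZMod z') ^ 4 = 0 := by
          intro h0
          rw [← h0, hu', map_add, map_mul, map_pow, map_one, map_ofNat]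
        apply hker
        have hnorm : ‖u'‖ < 1 := by
          have hnd : ‖u'‖ = ‖(1 : ℚ_[p]) + 18 * z ^ 4‖ := by
            rw [PadicInt.norm_def, hcoe]
          by_cases hu : (1 : ℚ_[p]) + 18 * z ^ 4 = 0
          · rw [hnd, hu, norm_zero]; norm_num
          · have hw0 : w ≠ 0 := by
              intro h0
              rw [h0] at hw'
              simp only [ne_eq, zero_pow, OfNat.ofNat_ne_zero, not_false_eq_true] at hw'
              rcases mul_eq_zero.mp hw'.symm with h' | h'
              · exact hpQ h'
              · exact hu h'
            have e1 : (w ^ 2).valuation = 2 * w.valuation := by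
              rw [pow_two, Padic.valuation_mul hw0 hw0]; ring
            have e2 : ((p : ℚ_[p]) * (1 + 18 * z ^ 4)).valuation
                = 1 + ((1 : ℚ_[p]) + 18 * z ^ 4).valuation := by
              rw [Padic.valuation_mul hpQ hu, Padic.valuation_p]
            rw [hw', e2] at e1
            have hvnn : 0 ≤ Padic.valuation ((u' : ℤ_[p]) : ℚ_[p]) := PadicInt.valuation_coe_nonneg (x := u')
            rw [hcoe] at hvnn
            have hge1 : 1 ≤ ((1 : ℚ_[p]) + 18 * z ^ 4).valuation := by omega
            rw [hnd, Padic.norm_eq_zpow_neg_valuation hu]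
            have hstep : (p : ℝ) ^ (-((1 : ℚ_[p]) + 18 * z ^ 4).valuation) < (p : ℝ) ^ (0 : ℤ) :=
              (zpow_lt_zpow_iff_right₀ hp1).mpr (by omega)
            simpa using hstep
        rw [← RingHom.mem_ker, PadicInt.ker_toZMod]
        rwa [IsLocalRing.mem_maximalIdeal, PadicInt.mem_nonunits]
    obtain ⟨ζ, hζeq⟩ := hzmod
    have hζ0 : ζ ≠ 0 := by
      intro h0
      rw [h0] at hζeq
      simp at hζeq
    refine ⟨(((ζ⁻¹ : ZMod p).val : ℤ)), ?_⟩
    apply (ZMod.intCast_eq_intCast_iff _ _ p).mp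
    push_cast
    rw [ZMod.natCast_val, ZMod.cast_id]
    have h4 : ζ ^ 4 ≠ 0 := pow_ne_zero _ hζ0
    field_simp
    linear_combination hζeq
  · rintro ⟨x, hx⟩
    have hdvd : (p : ℤ) ∣ x ^ 4 + 18 := by
      have h1 := hx.dvd
      have h2 : (-18 : ℤ) - x ^ 4 = -(x ^ 4 + 18) := by ring
      rw [h2] at h1
      exact dvd_neg.mp h1
    obtain ⟨z₀, N, hzN⟩ := key_int p h x hdvd
    have hp2 : p ≠ 2 := by intro h2; rw [h2] at h; omega
    obtain ⟨s, hs⟩ := exists_sqrt_one_add_p_mul p hp2 (N : ℤ_[p])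
    refine ⟨(z₀ : ℚ_[p]), (p : ℚ_[p]) * (s : ℚ_[p]), ?_⟩
    have hsQ : ((s : ℚ_[p])) ^ 2 = 1 + (p : ℚ_[p]) * ((N : ℤ) : ℚ_[p]) := by
      exact_mod_cast congrArg (fun t : ℤ_[p] => (t : ℚ_[p])) hs
    have hzQ : (1 : ℚ_[p]) + 18 * ((z₀ : ℤ) : ℚ_[p]) ^ 4
        = (p : ℚ_[p]) + (p : ℚ_[p]) ^ 2 * ((N : ℤ) : ℚ_[p]) := by
      have := congrArg (fun t : ℤ => (t : ℚ_[p])) hzN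
      push_cast at this
      exact this
    linear_combination ((p : ℚ_[p])) ^ 2 * hsQ - (p : ℚ_[p]) * hzQ
end

section
/- Let p be a prime with p ≠ 2 and p ≠ 3. Then the equation w² = p + 18pz⁴ has solutions z, w in each of the fields ℚ₂, ℚ₃ and ℚ_p if and only if one of the following holds: p ≡ 11 or 19 (mod 24); or p ≡ 1 (mod 24) and 2 is a fourth power modulo p; or p ≡ 17 (mod 24) and 2 is not a fourth power modulo p. -/
open PadicInt Polynomial

namespace CpAux

open PadicInt Polynomial

lemma exists_sq {q : ℕ} [Fact q.Prime] (n : ℤ_[q]) (a : ℤ_[q])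
    (h : ‖a ^ 2 - n‖ < ‖2 * a‖ ^ 2) : ∃ s : ℤ_[q], s ^ 2 = n := by
  have e1 : Polynomial.eval a (X ^ 2 - C n) = a ^ 2 - n := by simp
  have e2 : Polynomial.eval a (Polynomial.derivative (X ^ 2 - C n)) = 2 * a := by
    simp [Polynomial.derivative_X_pow]; norm_num
  have h' : ‖Polynomial.eval a (X ^ 2 - C n)‖ <
      ‖Polynomial.eval a (Polynomial.derivative (X ^ 2 - C n))‖ ^ 2 := by
    rw [e1, e2]; exact h
  obtain ⟨z, hz, -⟩ := hensels_lemma h'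
  exact ⟨z, by simpa [sub_eq_zero] using hz⟩

lemma norm_int_one {q : ℕ} [Fact q.Prime] (n : ℤ) (h : ¬ (q:ℤ) ∣ n) : ‖(n : ℤ_[q])‖ = 1 :=
  le_antisymm (PadicInt.norm_le_one _)
    (not_lt.mp (fun hlt => h ((PadicInt.norm_int_lt_one_iff_dvd n).mp hlt)))

lemma not_dvd_of_prime_ne {q m : ℕ} (hq : q.Prime) (h : ∀ r : ℕ, r.Prime → r ∣ m → q ≠ r) :
    ¬ (q:ℤ) ∣ (m:ℤ) := by
  rw [Int.natCast_dvd_natCast]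
  intro hd
  exact h q hq hd rfl

lemma exists_sq_odd {q : ℕ} [Fact q.Prime] (hq : q ≠ 2) (n : ℕ) (hn : n % q = 1) :
    ∃ s : ℤ_[q], s ^ 2 = (n : ℤ_[q]) := by
  apply exists_sq _ 1
  have hq1 : 1 < q := (Fact.out : q.Prime).one_lt
  have h1 : ‖(1:ℤ_[q])^2 - (n:ℤ_[q])‖ < 1 := by
    have hc : (1:ℤ_[q])^2 - (n:ℤ_[q]) = (Int.cast ((1:ℤ) - (n:ℤ)) : ℤ_[q]) := by push_cast; ring
    rw [hc, PadicInt.norm_int_lt_one_iff_dvd]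
    refine ⟨-(n / q : ℕ), ?_⟩
    have hd : n = q * (n / q) + 1 := by
      have := Nat.div_add_mod n q
      omega
    have hd' : (n:ℤ) = (q:ℤ) * ((n / q : ℕ):ℤ) + 1 := by exact_mod_cast hd
    rw [hd']
    ring
  have h2 : ‖2 * (1:ℤ_[q])‖ = 1 := by
    rw [mul_one]
    have hc : (((2:ℤ)) : ℤ_[q]) = (2:ℤ_[q]) := by push_cast; ring
    rw [← hc]
    apply norm_int_one
    rw [(by norm_num : (2:ℤ) = ((2:ℕ):ℤ)), Int.natCast_dvd_natCast]
    intro hd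
    exact hq ((Nat.prime_dvd_prime_iff_eq (Fact.out) Nat.prime_two).mp hd)
  rw [h2]
  simpa using h1

lemma exists_sq_two (n : ℕ) (hn : n % 8 = 1) : ∃ s : ℤ_[2], s ^ 2 = (n : ℤ_[2]) := by
  apply exists_sq _ 1
  have h1 : ‖(1:ℤ_[2])^2 - (n:ℤ_[2])‖ ≤ ((2:ℕ) : ℝ) ^ (-(3:ℕ) : ℤ) := by
    have hc : (1:ℤ_[2])^2 - (n:ℤ_[2]) = (Int.cast ((1:ℤ) - (n:ℤ)) : ℤ_[2]) := by push_cast; ring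
    rw [hc, PadicInt.norm_int_le_pow_iff_dvd]
    refine ⟨-(n / 8 : ℕ), ?_⟩
    have hd : n = 8 * (n / 8) + 1 := by
      have := Nat.div_add_mod n 8
      omega
    have hd' : (n:ℤ) = 8 * ((n / 8 : ℕ):ℤ) + 1 := by exact_mod_cast hd
    rw [hd']
    push_cast
    ring
  have h2 : ‖2 * (1:ℤ_[2])‖ = 2⁻¹ := by
    rw [mul_one]
    have : ((2:ℕ) : ℤ_[2]) = (2:ℤ_[2]) := by push_cast; ring
    rw [← this, PadicInt.norm_p]
    norm_num
  rw [h2]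
  refine lt_of_le_of_lt h1 ?_
  norm_num

open PadicInt Polynomial

lemma cast_q_ne_zero {q : ℕ} [Fact q.Prime] : (q:ℤ_[q]) ≠ 0 := by
  intro h0
  have h1 := PadicInt.norm_p (p := q)
  rw [h0, norm_zero] at h1
  have hq : 0 < (q:ℝ) := by exact_mod_cast (Fact.out : q.Prime).pos
  have : (0:ℝ) < (q:ℝ)⁻¹ := by positivity
  rw [← h1] at this
  exact lt_irrefl 0 this

lemma descend {q : ℕ} [Fact q.Prime] (C D : ℤ_[q]) :
    ∀ k (Z W : ℤ_[q]), W ^ 2 = (q:ℤ_[q]) ^ (4*k) * C + D * Z ^ 4 →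
    ∃ (k' : ℕ) (Z' W' : ℤ_[q]), W' ^ 2 = (q:ℤ_[q]) ^ (4*k') * C + D * Z' ^ 4 ∧
      (k' = 0 ∨ ¬ (q:ℤ_[q]) ∣ Z') := by
  intro k
  induction k with
  | zero => exact fun Z W h => ⟨0, Z, W, h, Or.inl rfl⟩
  | succ k ih =>
    intro Z W h
    by_cases hz : (q:ℤ_[q]) ∣ Z
    · obtain ⟨Z₁, rfl⟩ := hz
      have hq0 : (q:ℤ_[q]) ≠ 0 := cast_q_ne_zero
      have key : W ^ 2 = (q:ℤ_[q])^4 * ((q:ℤ_[q]) ^ (4*k) * C + D * Z₁ ^ 4) := by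
        rw [h]; ring
      have hdvdW : (q:ℤ_[q]) ∣ W := by
        refine (PadicInt.prime_p).dvd_of_dvd_pow (n := 2) ?_
        exact ⟨(q:ℤ_[q])^3 * ((q:ℤ_[q]) ^ (4*k) * C + D * Z₁ ^ 4), by rw [key]; ring⟩
      obtain ⟨W₁, rfl⟩ := hdvdW
      have key2 : W₁ ^ 2 = (q:ℤ_[q])^2 * ((q:ℤ_[q]) ^ (4*k) * C + D * Z₁ ^ 4) := by
        refine mul_left_cancel₀ (pow_ne_zero 2 hq0) ?_
        linear_combination key
      have hdvdW₁ : (q:ℤ_[q]) ∣ W₁ := by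
        refine (PadicInt.prime_p).dvd_of_dvd_pow (n := 2) ?_
        exact ⟨(q:ℤ_[q]) * ((q:ℤ_[q]) ^ (4*k) * C + D * Z₁ ^ 4), by rw [key2]; ring⟩
      obtain ⟨W₂, rfl⟩ := hdvdW₁
      have key3 : W₂ ^ 2 = (q:ℤ_[q]) ^ (4*k) * C + D * Z₁ ^ 4 := by
        refine mul_left_cancel₀ (pow_ne_zero 2 hq0) ?_
        linear_combination key2
      exact ih Z₁ W₂ key3
    · exact ⟨k+1, Z, W, h, Or.inr hz⟩

open PadicInt Polynomial

lemma normalize_sol {q : ℕ} [Fact q.Prime] (C D : ℤ_[q]) {z w : ℚ_[q]}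
    (h : w ^ 2 = (C : ℚ_[q]) + (D : ℚ_[q]) * z ^ 4) :
    ∃ (k : ℕ) (Z W : ℤ_[q]), W ^ 2 = (q:ℤ_[q]) ^ (4*k) * C + D * Z ^ 4 := by
  have hq1 : (1:ℝ) < (q:ℝ) := by exact_mod_cast (Fact.out : q.Prime).one_lt
  have hq0 : (0:ℝ) < (q:ℝ) := lt_trans one_pos hq1
  obtain ⟨k, hk⟩ := pow_unbounded_of_one_lt ‖z‖ hq1
  have hZ : ‖(q:ℚ_[q]) ^ k * z‖ ≤ 1 := by
    rw [_root_.norm_mul, _root_.norm_pow, Padic.norm_p]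
    have h1 : ‖z‖ ≤ (q:ℝ)^k := le_of_lt hk
    calc ((q:ℝ)⁻¹)^k * ‖z‖ ≤ ((q:ℝ)⁻¹)^k * (q:ℝ)^k := by
          apply mul_le_mul_of_nonneg_left h1 (by positivity)
      _ = 1 := by
          rw [← mul_pow, inv_mul_cancel₀ (ne_of_gt hq0), one_pow]
  set Z : ℤ_[q] := ⟨(q:ℚ_[q]) ^ k * z, hZ⟩ with hZdef
  have hWsq : ((q:ℚ_[q]) ^ (2*k) * w) ^ 2
      = ((((q:ℤ_[q]) ^ (4*k) * C + D * Z ^ 4 : ℤ_[q]) : ℚ_[q])) := by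
    push_cast
    linear_combination ((q:ℚ_[q]))^(4*k) * h
  have hW : ‖(q:ℚ_[q]) ^ (2*k) * w‖ ≤ 1 := by
    have h2 : ‖((q:ℚ_[q]) ^ (2*k) * w) ^ 2‖ ≤ 1 := by
      rw [hWsq]
      exact PadicInt.norm_le_one _
    rw [_root_.norm_pow] at h2
    nlinarith [norm_nonneg ((q:ℚ_[q]) ^ (2*k) * w)]
  refine ⟨k, Z, ⟨(q:ℚ_[q]) ^ (2*k) * w, hW⟩, Subtype.coe_injective ?_⟩
  show ((q:ℚ_[q]) ^ (2*k) * w) ^ 2 = _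
  exact hWsq

open PadicInt Polynomial

lemma dvd_iff_toZMod_eq_zero {q : ℕ} [Fact q.Prime] (x : ℤ_[q]) :
    (q:ℤ_[q]) ∣ x ↔ PadicInt.toZMod x = 0 := by
  rw [← Ideal.mem_span_singleton, ← PadicInt.maximalIdeal_eq_span_p, ← PadicInt.ker_toZMod,
    RingHom.mem_ker]

lemma even_of_toZModPow {x : ℤ_[2]} (h : ∃ d : ZMod (2^4), (PadicInt.toZModPow 4) x = 2 * d) :
    (2:ℤ_[2]) ∣ x := by
  obtain ⟨d, hd⟩ := h
  have h0 : (PadicInt.toZModPow 4) (x - 2 * ((d.val : ℕ) : ℤ_[2])) = 0 := by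
    rw [map_sub, map_mul, map_natCast, hd, map_ofNat]
    rw [ZMod.natCast_zmod_val]
    ring
  have hker : x - 2 * ((d.val : ℕ) : ℤ_[2]) ∈ RingHom.ker (PadicInt.toZModPow (p := 2) 4) := h0
  rw [PadicInt.ker_toZModPow, Ideal.mem_span_singleton] at hker
  obtain ⟨c, hc⟩ := hker
  have : x = 2 * (((d.val : ℕ) : ℤ_[2]) + (2:ℤ_[2])^3 * c) := by
    have h2 : ((2:ℕ):ℤ_[2]) = (2:ℤ_[2]) := by push_cast; ring
    rw [h2] at hc
    linear_combination hc
  exact ⟨_, this⟩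

lemma odd_zmod_split : ∀ x : ZMod (2^4), (∃ d : ZMod (2^4), x = 2*d) ∨ (∃ d : ZMod (2^4), x = 2*d+1) := by decide

lemma zmod8_claim : ∀ (c ζ d : ZMod 8), c^2 = (2*d+1) + 18*(2*d+1)*ζ^4 → (2*d+1 = (1:ZMod 8) ∨ 2*d+1 = 3) := by decide

lemma zmod16_claim : ∀ (c d e : ZMod (2^4)), c^2 ≠ 18*(2*d+1)*(2*e+1)^4 := by decide

open PadicInt Polynomial
lemma mod8_cases (p : ℕ) (h : (p:ZMod (2^3)) = 1 ∨ (p:ZMod (2^3)) = 3) : p % 8 = 1 ∨ p % 8 = 3 := by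
  have h' : ((p % 8 : ℕ):ZMod (2^3)) = 1 ∨ ((p % 8 : ℕ):ZMod (2^3)) = 3 := by
    rw [show ((2:ℕ)^3) = 8 from rfl] at *
    rw [ZMod.natCast_mod p 8]
    exact h
  have h8 : p % 8 < 8 := Nat.mod_lt _ (by norm_num)
  interval_cases h' : p % 8 <;> revert h' <;> decide

lemma forward_two (p : ℕ) [Fact p.Prime] (hp2 : p ≠ 2)
    (h : ∃ z w : ℚ_[2], w ^ 2 = (p : ℚ_[2]) + 18 * (p : ℚ_[2]) * z ^ 4) :
    p % 8 = 1 ∨ p % 8 = 3 := by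
  obtain ⟨z, w, h⟩ := h
  obtain ⟨t, ht⟩ : Odd p := (Fact.out : p.Prime).odd_of_ne_two hp2
  have h' : w ^ 2 = (((p:ℤ_[2]) : ℚ_[2])) + (((18 * (p:ℕ) : ℤ_[2])) : ℚ_[2]) * z ^ 4 := by
    push_cast
    exact h
  obtain ⟨k, Z, W, hW⟩ := normalize_sol (p:ℤ_[2]) (18*(p:ℕ)) h'
  obtain ⟨k', Z', W', hW', hmin⟩ := descend _ _ k Z W hW
  obtain hk0 | hpos := Nat.eq_zero_or_pos k'
  · subst hk0
    have h0 : W' ^ 2 = (p:ℤ_[2]) + 18 * ((p:ℕ):ℤ_[2]) * Z' ^ 4 := by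
      rw [hW', mul_zero, pow_zero, one_mul]
    have h8 := congrArg (PadicInt.toZModPow 3) h0
    simp only [map_pow, map_add, map_mul, map_natCast, map_ofNat] at h8
    have hp8 : ((p:ℕ) : ZMod (2^3)) = 2*(t : ZMod (2^3))+1 := by
      rw [ht]; push_cast; ring
    rw [hp8] at h8
    have hc := zmod8_claim _ _ _ h8
    rw [← hp8] at hc
    exact mod8_cases p hc
  · obtain ⟨s, rfl⟩ : ∃ s, k' = s + 1 := ⟨k' - 1, by omega⟩
    have hznd : ¬ (2:ℤ_[2]) ∣ Z' := by
      rcases hmin with h0 | h1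
      · omega
      · intro hd; apply h1; exact_mod_cast hd
    exfalso
    have h16 := congrArg (PadicInt.toZModPow 4) hW'
    simp only [map_pow, map_add, map_mul, map_natCast, map_ofNat] at h16
    have hzero : ((2:ℕ) : ZMod (2^4)) ^ (4*(s+1)) = 0 := by
      rw [show (4*(s+1)) = 4 + 4*s from by ring, pow_add]
      have : ((2:ℕ) : ZMod (2^4)) ^ 4 = 0 := by decide
      rw [this, zero_mul]
    rw [hzero, zero_mul, zero_add] at h16
    -- Z' odd
    obtain hev | hod := odd_zmod_split ((PadicInt.toZModPow 4) Z')
    · exact hznd (even_of_toZModPow (by exact hev))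
    obtain ⟨e, he⟩ := hod
    obtain ⟨d, hd⟩ : ∃ d : ZMod (2^4), ((p:ℕ) : ZMod (2^4)) = 2*d+1 := by
      exact ⟨(t : ZMod (2^4)), by rw [ht]; push_cast; ring⟩
    rw [he, hd] at h16
    exact zmod16_claim _ _ _ h16

open PadicInt Polynomial
lemma not_dvd_18 {p : ℕ} (hp : p.Prime) (hp2 : p ≠ 2) (hp3 : p ≠ 3) : ¬ p ∣ 18 := by
  intro h
  have h1 : 2 ≤ p := hp.two_le
  have h2 : p ≤ 18 := Nat.le_of_dvd (by norm_num) h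
  interval_cases p <;> revert h hp <;> first | (intro _ _; omega) | decide

lemma cast18_ne_zero {p : ℕ} [Fact p.Prime] (hp2 : p ≠ 2) (hp3 : p ≠ 3) :
    (18 : ZMod p) ≠ 0 := by
  have : ((18:ℕ) : ZMod p) ≠ 0 := by
    rw [Ne, ZMod.natCast_eq_zero_iff]
    exact not_dvd_18 Fact.out hp2 hp3
  exact_mod_cast this

lemma forward_p (p : ℕ) [Fact p.Prime] (hp2 : p ≠ 2) (hp3 : p ≠ 3)
    (h : ∃ z w : ℚ_[p], w ^ 2 = (p : ℚ_[p]) + 18 * (p : ℚ_[p]) * z ^ 4) :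
    ∃ y : ZMod p, 18 * y ^ 4 = -1 := by
  obtain ⟨z, w, h⟩ := h
  have h' : w ^ 2 = (((p:ℤ_[p]) : ℚ_[p])) + (((18 * (p:ℕ) : ℤ_[p])) : ℚ_[p]) * z ^ 4 := by
    push_cast
    exact h
  obtain ⟨k, Z, W, hW⟩ := normalize_sol (p:ℤ_[p]) (18*(p:ℕ)) h'
  obtain ⟨k', Z', W', hW', hmin⟩ := descend _ _ k Z W hW
  -- first: p ∣ W'
  have hdvdW : (p:ℤ_[p]) ∣ W' := by
    rw [dvd_iff_toZMod_eq_zero]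
    have h1 := congrArg PadicInt.toZMod hW'
    simp only [map_pow, map_add, map_mul, map_natCast, map_ofNat, ZMod.natCast_self,
      zero_mul, mul_zero, add_zero, zero_add] at h1
    exact pow_eq_zero_iff (by norm_num : 2 ≠ 0) |>.mp h1
  obtain ⟨W₁, hW₁⟩ := hdvdW
  have hkey : (p:ℤ_[p]) * W₁ ^ 2 = (p:ℤ_[p]) ^ (4*k') + 18 * Z' ^ 4 := by
    refine mul_left_cancel₀ (cast_q_ne_zero (q := p)) ?_
    rw [hW₁] at hW'
    linear_combination hW'
  have h1 := congrArg PadicInt.toZMod hkey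
  simp only [map_pow, map_add, map_mul, map_natCast, map_ofNat, ZMod.natCast_self,
    zero_mul] at h1
  obtain hk0 | hpos := Nat.eq_zero_or_pos k'
  · subst hk0
    rw [mul_zero, pow_zero] at h1
    refine ⟨PadicInt.toZMod Z', ?_⟩
    linear_combination -h1
  · exfalso
    rw [zero_pow (by omega : 4*k' ≠ 0), zero_add] at h1
    have hz0 : PadicInt.toZMod Z' = 0 := by
      have h18 := cast18_ne_zero (p := p) hp2 hp3
      have : (PadicInt.toZMod Z') ^ 4 = 0 := by
        rcases mul_eq_zero.mp h1.symm with hc | hc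
        · exact absurd hc h18
        · exact hc
      exact pow_eq_zero_iff (by norm_num : 4 ≠ 0) |>.mp this
    rcases hmin with h0 | hnd
    · omega
    · exact hnd ((dvd_iff_toZMod_eq_zero Z').mpr hz0)

open PadicInt Polynomial
lemma backward_two (p : ℕ) [Fact p.Prime] (h : p % 8 = 1 ∨ p % 8 = 3) :
    ∃ z w : ℚ_[2], w ^ 2 = (p : ℚ_[2]) + 18 * (p : ℚ_[2]) * z ^ 4 := by
  rcases h with h | h
  · obtain ⟨s, hs⟩ := exists_sq_two p h
    refine ⟨0, (s : ℚ_[2]), ?_⟩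
    have hc : ((s : ℚ_[2]))^2 = (p:ℚ_[2]) := by exact_mod_cast congrArg (fun x : ℤ_[2] => (x:ℚ_[2])) hs
    rw [hc]; ring
  · obtain ⟨s, hs⟩ := exists_sq_two (19*p) (by omega)
    refine ⟨1, (s : ℚ_[2]), ?_⟩
    have hc : ((s : ℚ_[2]))^2 = ((19*p : ℕ):ℚ_[2]) := by
      exact_mod_cast congrArg (fun x : ℤ_[2] => (x:ℚ_[2])) hs
    push_cast at hc
    rw [hc]; ring

lemma backward_three (p : ℕ) [Fact p.Prime] (hp3 : p ≠ 3) :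
    ∃ z w : ℚ_[3], w ^ 2 = (p : ℚ_[3]) + 18 * (p : ℚ_[3]) * z ^ 4 := by
  have hp : ¬ 3 ∣ p := by
    intro hd
    exact hp3 ((Nat.prime_dvd_prime_iff_eq Nat.prime_three Fact.out).mp hd).symm
  have h3 : p % 3 = 1 ∨ p % 3 = 2 := by omega
  rcases h3 with h | h
  · obtain ⟨s, hs⟩ := exists_sq_odd (q := 3) (by norm_num) p h
    refine ⟨0, (s : ℚ_[3]), ?_⟩
    have hc : ((s : ℚ_[3]))^2 = (p:ℚ_[3]) := by exact_mod_cast congrArg (fun x : ℤ_[3] => (x:ℚ_[3])) hs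
    rw [hc]; ring
  · obtain ⟨s, hs⟩ := exists_sq_odd (q := 3) (by norm_num) (11*p) (by omega)
    have h30 : (3:ℚ_[3]) ≠ 0 := by
      have : ((3:ℕ):ℚ_[3]) ≠ 0 := Nat.cast_ne_zero.mpr (by norm_num)
      exact_mod_cast this
    refine ⟨(3:ℚ_[3])⁻¹, (s : ℚ_[3]) * (3:ℚ_[3])⁻¹, ?_⟩
    have hc : ((s : ℚ_[3]))^2 = 11 * (p:ℚ_[3]) := by
      have := congrArg (fun x : ℤ_[3] => (x:ℚ_[3])) hs
      push_cast at this
      exact_mod_cast this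
    field_simp
    linear_combination (9:ℚ_[3]) * hc

open PadicInt Polynomial
lemma backward_p (p : ℕ) [Fact p.Prime] (hp2 : p ≠ 2) (hp3 : p ≠ 3)
    (h : ∃ y : ZMod p, 18 * y ^ 4 = -1) :
    ∃ z w : ℚ_[p], w ^ 2 = (p : ℚ_[p]) + 18 * (p : ℚ_[p]) * z ^ 4 := by
  obtain ⟨c, hc⟩ := h
  have hcne : c ≠ 0 := by
    intro h0
    rw [h0] at hc
    apply (one_ne_zero : (1 : ZMod p) ≠ 0)
    linear_combination hc
  set a : ℤ_[p] := ((c.val : ℕ) : ℤ_[p]) with ha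
  have hta : PadicInt.toZMod a = c := by rw [ha, map_natCast, ZMod.natCast_zmod_val]
  set F : Polynomial ℤ_[p] := C 18 * X ^ 4 + C (1 - (p:ℤ_[p])) with hF
  have he1 : F.eval a = 18 * a ^ 4 + (1 - (p:ℤ_[p])) := by
    simp [hF]
  have he2 : F.derivative.eval a = 72 * a ^ 3 := by
    simp [hF, Polynomial.derivative_X_pow]
    ring
  have heval : ‖F.eval a‖ < 1 := by
    rw [he1, PadicInt.norm_lt_one_iff_dvd]
    rw [dvd_iff_toZMod_eq_zero]
    simp only [map_add, map_sub, map_mul, map_pow, map_ofNat, map_one, map_natCast, hta,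
      ZMod.natCast_self]
    linear_combination hc
  have hderiv : ‖F.derivative.eval a‖ = 1 := by
    rw [he2]
    have h72 : ‖(72 : ℤ_[p])‖ = 1 := by
      have : ((72:ℤ) : ℤ_[p]) = (72 : ℤ_[p]) := by push_cast; ring
      rw [← this]
      apply norm_int_one
      rw [(by norm_num : (72:ℤ) = ((72:ℕ):ℤ)), Int.natCast_dvd_natCast]
      intro hd
      have hd18 : p ∣ 18 ∨ p ∣ 4 := by
        have h72 : (18 * 4 : ℕ) = 72 := by norm_num
        exact (Nat.Prime.dvd_mul Fact.out).mp (h72 ▸ hd)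
      rcases hd18 with hd' | hd'
      · exact not_dvd_18 Fact.out hp2 hp3 hd'
      · have h4 : p ≤ 4 := Nat.le_of_dvd (by norm_num) hd'
        have hpp : p.Prime := Fact.out
        have h2 : 2 ≤ p := hpp.two_le
        interval_cases p <;> first | omega | (revert hpp; decide)
    have hna : ‖a‖ = 1 := by
      have : ((c.val : ℤ) : ℤ_[p]) = a := by rw [ha]; push_cast; ring
      rw [← this]
      apply norm_int_one
      rw [Int.natCast_dvd_natCast]
      intro hd
      have hlt : c.val < p := ZMod.val_lt c
      have : c.val = 0 := Nat.eq_zero_of_dvd_of_lt hd hlt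
      exact hcne ((ZMod.val_eq_zero c).mp this)
    rw [norm_mul, norm_pow, hna, one_pow, mul_one, h72]
  obtain ⟨z, hz, -⟩ := hensels_lemma (F := F) (a := a) (by rw [Polynomial.coe_aeval_eq_eval, hderiv]; simpa using heval)
  have hez : 18 * z ^ 4 + (1 - (p:ℤ_[p])) = 0 := by simpa [hF] using hz
  refine ⟨(z:ℚ_[p]), (p:ℚ_[p]), ?_⟩
  have hzc : 18 * (z:ℚ_[p]) ^ 4 + (1 - (p:ℚ_[p])) = 0 := by
    exact_mod_cast congrArg (fun x : ℤ_[p] => (x:ℚ_[p])) hez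
  linear_combination (-(p:ℚ_[p])) * hzc

lemma fourth_iff_pow {p : ℕ} [Fact p.Prime] (hp : p % 4 = 1) (a : ZMod p) (ha : a ≠ 0) :
    (∃ x : ZMod p, x ^ 4 = a) ↔ a ^ ((p - 1) / 4) = 1 := by
  have hp5 : 5 ≤ p := by
    have := (Fact.out : p.Prime).two_le
    rcases Nat.lt_or_ge p 5 with h | h
    · interval_cases p <;> simp_all
    · exact h
  obtain ⟨m, hm⟩ : ∃ m, p - 1 = 4 * m := ⟨(p-1)/4, by omega⟩
  have hmpos : 0 < m := by omega
  have hdiv : (p - 1) / 4 = m := by omega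
  rw [hdiv]
  constructor
  · rintro ⟨x, rfl⟩
    have hx : x ≠ 0 := by rintro rfl; simp at ha
    rw [← pow_mul, ← hm, ZMod.pow_card_sub_one_eq_one hx]
  · intro h1
    -- move to units
    have hu : IsUnit a := isUnit_iff_ne_zero.mpr ha
    set u : (ZMod p)ˣ := hu.unit with hudef
    obtain ⟨g, hg⟩ := IsCyclic.exists_generator (α := (ZMod p)ˣ)
    have hcard : Fintype.card (ZMod p)ˣ = p - 1 := by
      rw [ZMod.card_units_eq_totient, Nat.totient_prime Fact.out]
    have horder : orderOf g = p - 1 := by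
      rw [orderOf_eq_card_of_forall_mem_zpowers hg, Nat.card_eq_fintype_card, hcard]
    obtain ⟨j, hj⟩ : ∃ j : ℕ, g ^ j = u := by
      have := hg u
      rwa [← mem_powers_iff_mem_zpowers, Submonoid.mem_powers_iff] at this
    have hum : u ^ m = 1 := by
      ext
      push_cast
      rw [hudef]
      simp only [IsUnit.unit_spec]
      exact h1
    have hdvd : (p - 1) ∣ j * m := by
      rw [← horder]
      apply orderOf_dvd_of_pow_eq_one
      rw [← hj, ← pow_mul] at hum
      exact hum
    rw [hm] at hdvd
    have h4j : 4 ∣ j := by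
      rcases hdvd with ⟨c, hc⟩
      exact ⟨c, Nat.eq_of_mul_eq_mul_right hmpos (by rw [hc]; ring)⟩
    obtain ⟨t, rfl⟩ := h4j
    refine ⟨((g ^ t : (ZMod p)ˣ) : ZMod p), ?_⟩
    have : ((g ^ t) ^ 4 : (ZMod p)ˣ) = u := by rw [← pow_mul, mul_comm t 4, hj]
    calc ((g ^ t : (ZMod p)ˣ) : ZMod p) ^ 4 = (((g ^ t) ^ 4 : (ZMod p)ˣ) : ZMod p) := by push_cast; ring
      _ = a := by rw [this, hudef]; simp

lemma fourth_iff_sq {p : ℕ} [Fact p.Prime] (hp : p % 4 = 3) (a : ZMod p) (ha : a ≠ 0) :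
    (∃ x : ZMod p, x ^ 4 = a) ↔ IsSquare a := by
  have hp2 : p ≠ 2 := by omega
  constructor
  · rintro ⟨x, rfl⟩
    exact ⟨x^2, by ring⟩
  · rintro ⟨v, rfl⟩
    have hv : v ≠ 0 := by rintro rfl; simp at ha
    by_cases hsv : IsSquare v
    · obtain ⟨w, rfl⟩ := hsv
      exact ⟨w, by ring⟩
    · have hnegv : IsSquare (-v) := by
        rw [ZMod.euler_criterion p (neg_ne_zero.mpr hv)]
        have hodd : p / 2 = 2 * (p / 4) + 1 := by omega
        have hv2 : v ^ (p / 2) = -1 := by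
          rcases ZMod.pow_div_two_eq_neg_one_or_one p hv with h | h
          · exact absurd ((ZMod.euler_criterion p hv).mpr h) hsv
          · exact h
        rw [neg_pow, hv2, hodd]
        simp [pow_succ, pow_mul]
      obtain ⟨w, hw⟩ := hnegv
      exact ⟨w, by rw [show w^4 = (w*w)^2 by ring, ← hw]; ring⟩

lemma cast2_ne_zero {p : ℕ} [Fact p.Prime] (hp2 : p ≠ 2) : (2 : ZMod p) ≠ 0 := by
  have : ((2:ℕ) : ZMod p) ≠ 0 := by
    rw [Ne, ZMod.natCast_eq_zero_iff]
    intro hd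
    exact hp2 ((Nat.prime_dvd_prime_iff_eq (Fact.out) Nat.prime_two).mp hd)
  exact_mod_cast this

lemma cast3_ne_zero {p : ℕ} [Fact p.Prime] (hp3 : p ≠ 3) : (3 : ZMod p) ≠ 0 := by
  have : ((3:ℕ) : ZMod p) ≠ 0 := by
    rw [Ne, ZMod.natCast_eq_zero_iff]
    intro hd
    exact hp3 ((Nat.prime_dvd_prime_iff_eq (Fact.out) Nat.prime_three).mp hd)
  exact_mod_cast this

lemma sq3_iff {p : ℕ} [Fact p.Prime] (hp2 : p ≠ 2) (hp4 : p % 4 = 1) :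
    IsSquare (3 : ZMod p) ↔ IsSquare ((p : ℕ) : ZMod 3) := by
  have := ZMod.exists_sq_eq_prime_iff_of_mod_four_eq_one (p := p) (q := 3) hp4 (by norm_num)
  have hc : ((3:ℕ) : ZMod p) = (3 : ZMod p) := by push_cast; ring
  rw [← hc]
  exact this

lemma Deq {p : ℕ} [Fact p.Prime] (h18 : (18:ZMod p) ≠ 0) :
    (∃ y : ZMod p, 18 * y ^ 4 = -1) ↔ (∃ x : ZMod p, x ^ 4 = -18) := by
  constructor
  · rintro ⟨y, hy⟩
    have hy0 : y ≠ 0 := by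
      rintro rfl
      have h1 : (1:ZMod p) = 0 := by linear_combination hy
      exact one_ne_zero h1
    refine ⟨y⁻¹, ?_⟩
    have hinv : y⁻¹ * y = 1 := inv_mul_cancel₀ hy0
    have key : (y⁻¹)^4 * (18 * y^4) = 18 := by
      rw [show (y⁻¹)^4 * (18*y^4) = 18 * (y⁻¹*y)^4 by ring, hinv]; ring
    rw [hy] at key
    linear_combination -key
  · rintro ⟨x, hx⟩
    have hx0 : x ≠ 0 := by
      rintro rfl
      rw [show ((0:ZMod p))^4 = 0 by ring] at hx
      exact neg_ne_zero.mpr h18 hx.symm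
    have key : (18 * (x⁻¹)^4) * x^4 = 18 := by
      rw [show (18*(x⁻¹)^4)*x^4 = 18*(x⁻¹*x)^4 by ring, inv_mul_cancel₀ hx0]; ring
    rw [hx] at key
    have h2 : (18:ZMod p) * ((18 * (x⁻¹)^4) + 1) = 0 := by linear_combination -key
    rcases mul_eq_zero.mp h2 with h | h
    · exact absurd h h18
    · exact ⟨x⁻¹, by linear_combination h⟩

lemma arith (p : ℕ) [Fact p.Prime] (hp2 : p ≠ 2) (hp3 : p ≠ 3) :
    (((p % 8 = 1 ∨ p % 8 = 3) ∧ ∃ x : ZMod p, x ^ 4 = -18) ↔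
      ((p % 24 = 11 ∨ p % 24 = 19) ∨
        (p % 24 = 1 ∧ ∃ x : ZMod p, x ^ 4 = 2) ∨
        (p % 24 = 17 ∧ ¬∃ x : ZMod p, x ^ 4 = 2))) := by
  have hpp : p.Prime := Fact.out
  have hnd2 : ¬ 2 ∣ p := fun hd => hp2 ((Nat.prime_dvd_prime_iff_eq Nat.prime_two hpp).mp hd).symm
  have hnd3 : ¬ 3 ∣ p := fun hd => hp3 ((Nat.prime_dvd_prime_iff_eq Nat.prime_three hpp).mp hd).symm
  have h18 : (18:ZMod p) ≠ 0 := cast18_ne_zero hp2 hp3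
  have hneg18 : (-18:ZMod p) ≠ 0 := neg_ne_zero.mpr h18
  have h2ne : (2:ZMod p) ≠ 0 := cast2_ne_zero hp2
  have h3ne : (3:ZMod p) ≠ 0 := cast3_ne_zero hp3
  have h24 : p % 24 = 1 ∨ p % 24 = 5 ∨ p % 24 = 7 ∨ p % 24 = 11 ∨ p % 24 = 13 ∨
      p % 24 = 17 ∨ p % 24 = 19 ∨ p % 24 = 23 := by omega
  -- helper for the p % 8 = 3 cases
  have case3 : p % 8 = 3 → ∃ x : ZMod p, x ^ 4 = -18 := by
    intro h8
    have hp4 : p % 4 = 3 := by omega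
    obtain ⟨b, hb⟩ : IsSquare (-2 : ZMod p) :=
      (ZMod.exists_sq_eq_neg_two_iff hp2).mpr (Or.inr h8)
    refine (fourth_iff_sq hp4 (-18) hneg18).mpr ⟨3*b, ?_⟩
    linear_combination 9*hb
  -- helper for p % 8 = 1 : relation (-18)^m vs 2^m
  rcases h24 with h | h | h | h | h | h | h | h
  -- p % 24 = 1
  · have h8 : p % 8 = 1 := by omega
    have hp4 : p % 4 = 1 := by omega
    have hsq3 : IsSquare (3 : ZMod p) := by
      rw [sq3_iff hp2 hp4]
      have : ((p:ℕ) : ZMod 3) = ((p % 3 : ℕ) : ZMod 3) := (ZMod.natCast_mod p 3).symm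
      rw [this, show p % 3 = 1 by omega]
      exact ⟨1, by decide⟩
    have h9 : (9:ZMod p) ^ ((p-1)/4) = 1 := by
      rw [show (9:ZMod p) = 3^2 by norm_num, ← pow_mul]
      have he : 2 * ((p-1)/4) = p / 2 := by omega
      rw [he]
      exact (ZMod.euler_criterion p h3ne).mp hsq3
    have hm1 : (-1:ZMod p) ^ ((p-1)/4) = 1 := Even.neg_one_pow ⟨(p-1)/8, by omega⟩
    have key : (-18:ZMod p) ^ ((p-1)/4) = 2 ^ ((p-1)/4) := by
      rw [show (-18:ZMod p) = (-1) * 2 * 9 by norm_num, mul_pow, mul_pow, hm1, h9, one_mul, mul_one]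
    constructor
    · rintro ⟨-, hx⟩
      refine Or.inr (Or.inl ⟨h, ?_⟩)
      rw [fourth_iff_pow hp4 2 h2ne, ← key]
      exact (fourth_iff_pow hp4 (-18) hneg18).mp hx
    · rintro ((h' | h') | ⟨-, hx⟩ | ⟨h', -⟩)
      · omega
      · omega
      · refine ⟨Or.inl h8, ?_⟩
        rw [fourth_iff_pow hp4 (-18) hneg18, key]
        exact (fourth_iff_pow hp4 2 h2ne).mp hx
      · omega
  -- p % 24 = 5
  · constructor
    · rintro ⟨h8 | h8, -⟩ <;> omega
    · rintro ((h' | h') | ⟨h', -⟩ | ⟨h', -⟩) <;> omega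
  -- p % 24 = 7
  · constructor
    · rintro ⟨h8 | h8, -⟩ <;> omega
    · rintro ((h' | h') | ⟨h', -⟩ | ⟨h', -⟩) <;> omega
  -- p % 24 = 11
  · exact ⟨fun _ => Or.inl (Or.inl h), fun _ => ⟨Or.inr (by omega), case3 (by omega)⟩⟩
  -- p % 24 = 13
  · constructor
    · rintro ⟨h8 | h8, -⟩ <;> omega
    · rintro ((h' | h') | ⟨h', -⟩ | ⟨h', -⟩) <;> omega
  -- p % 24 = 17
  · have h8 : p % 8 = 1 := by omega
    have hp4 : p % 4 = 1 := by omega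
    have hns3 : ¬ IsSquare (3 : ZMod p) := by
      rw [sq3_iff hp2 hp4]
      have : ((p:ℕ) : ZMod 3) = ((p % 3 : ℕ) : ZMod 3) := (ZMod.natCast_mod p 3).symm
      rw [this, show p % 3 = 2 by omega]
      decide
    have h3m : (3:ZMod p) ^ (p/2) = -1 := by
      rcases ZMod.pow_div_two_eq_neg_one_or_one p h3ne with h' | h'
      · exact absurd ((ZMod.euler_criterion p h3ne).mpr h') hns3
      · exact h'
    have h9 : (9:ZMod p) ^ ((p-1)/4) = -1 := by
      rw [show (9:ZMod p) = 3^2 by norm_num, ← pow_mul]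
      have he : 2 * ((p-1)/4) = p / 2 := by omega
      rw [he]
      exact h3m
    have hm1 : (-1:ZMod p) ^ ((p-1)/4) = 1 := Even.neg_one_pow ⟨(p-1)/8, by omega⟩
    have key : (-18:ZMod p) ^ ((p-1)/4) = -(2 ^ ((p-1)/4)) := by
      rw [show (-18:ZMod p) = (-1) * 2 * 9 by norm_num, mul_pow, mul_pow, hm1, h9, one_mul]
      ring
    have hsq2 : IsSquare (2 : ZMod p) := (ZMod.exists_sq_eq_two_iff hp2).mpr (Or.inl h8)
    have heps : (2:ZMod p) ^ ((p-1)/4) = 1 ∨ (2:ZMod p) ^ ((p-1)/4) = -1 := by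
      have hsq : ((2:ZMod p) ^ ((p-1)/4)) * ((2:ZMod p) ^ ((p-1)/4)) = 1 := by
        rw [← pow_add]
        have he : (p-1)/4 + (p-1)/4 = p / 2 := by omega
        rw [he]
        exact (ZMod.euler_criterion p h2ne).mp hsq2
      exact mul_self_eq_one_iff.mp hsq
    have hone : (1:ZMod p) ≠ -1 := by
      intro h'
      apply h2ne
      linear_combination h'
    constructor
    · rintro ⟨-, hx⟩
      refine Or.inr (Or.inr ⟨h, ?_⟩)
      rw [fourth_iff_pow hp4 2 h2ne]
      have := (fourth_iff_pow hp4 (-18) hneg18).mp hx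
      rw [key] at this
      intro h1
      rw [h1] at this
      exact hone this.symm
    · rintro ((h' | h') | ⟨h', -⟩ | ⟨-, hx⟩)
      · omega
      · omega
      · omega
      · refine ⟨Or.inl h8, ?_⟩
        rw [fourth_iff_pow hp4 (-18) hneg18, key]
        rw [fourth_iff_pow hp4 2 h2ne] at hx
        rcases heps with h' | h'
        · exact absurd h' hx
        · rw [h']; ring
  -- p % 24 = 19
  · exact ⟨fun _ => Or.inl (Or.inr h), fun _ => ⟨Or.inr (by omega), case3 (by omega)⟩⟩
  -- p % 24 = 23
  · constructor
    · rintro ⟨h8 | h8, -⟩ <;> omega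
    · rintro ((h' | h') | ⟨h', -⟩ | ⟨h', -⟩) <;> omega

lemma bridge (p : ℕ) [Fact p.Prime] :
    (∃ x : ℤ, x ^ 4 ≡ 2 [ZMOD (p : ℤ)]) ↔ ∃ x : ZMod p, x ^ 4 = 2 := by
  constructor
  · rintro ⟨x, hx⟩
    refine ⟨(x : ZMod p), ?_⟩
    have h1 : ((x^4 : ℤ) : ZMod p) = ((2 : ℤ) : ZMod p) := by
      have := (ZMod.intCast_eq_intCast_iff (x^4) 2 p).mpr ?_
      · exact this
      · exact_mod_cast hx
    push_cast at h1
    exact h1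
  · rintro ⟨x, hx⟩
    obtain ⟨y, rfl⟩ := ZMod.intCast_surjective x
    refine ⟨y, ?_⟩
    have h1 : ((y^4 : ℤ) : ZMod p) = ((2 : ℤ) : ZMod p) := by push_cast; exact hx
    have := (ZMod.intCast_eq_intCast_iff (y^4) 2 p).mp h1
    exact_mod_cast this

end CpAux



theorem Cp_locally_solvable_iff (p : ℕ) [Fact p.Prime] (hp2 : p ≠ 2) (hp3 : p ≠ 3) :
    ((∃ z w : ℚ_[2], w ^ 2 = (p : ℚ_[2]) + 18 * (p : ℚ_[2]) * z ^ 4) ∧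
      (∃ z w : ℚ_[3], w ^ 2 = (p : ℚ_[3]) + 18 * (p : ℚ_[3]) * z ^ 4) ∧
      (∃ z w : ℚ_[p], w ^ 2 = (p : ℚ_[p]) + 18 * (p : ℚ_[p]) * z ^ 4)) ↔
      ((p % 24 = 11 ∨ p % 24 = 19) ∨
        (p % 24 = 1 ∧ ∃ x : ℤ, x ^ 4 ≡ 2 [ZMOD (p : ℤ)]) ∨
        (p % 24 = 17 ∧ ¬∃ x : ℤ, x ^ 4 ≡ 2 [ZMOD (p : ℤ)])) := by
  constructor
  · rintro ⟨h2, _h3, hp⟩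
    have h8 := CpAux.forward_two p hp2 h2
    have hD := CpAux.forward_p p hp2 hp3 hp
    have hx : ∃ x : ZMod p, x ^ 4 = -18 :=
      (CpAux.Deq (CpAux.cast18_ne_zero hp2 hp3)).mp hD
    have hres := (CpAux.arith p hp2 hp3).mp ⟨h8, hx⟩
    rcases hres with h | ⟨h1, hx2⟩ | ⟨h1, hx2⟩
    · exact Or.inl h
    · exact Or.inr (Or.inl ⟨h1, (CpAux.bridge p).mpr hx2⟩)
    · exact Or.inr (Or.inr ⟨h1, fun hex => hx2 ((CpAux.bridge p).mp hex)⟩)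
  · intro h
    have h' : (p % 8 = 1 ∨ p % 8 = 3) ∧ ∃ x : ZMod p, x ^ 4 = -18 := by
      apply (CpAux.arith p hp2 hp3).mpr
      rcases h with h | ⟨h1, hx⟩ | ⟨h1, hx⟩
      · exact Or.inl h
      · exact Or.inr (Or.inl ⟨h1, (CpAux.bridge p).mp hx⟩)
      · exact Or.inr (Or.inr ⟨h1, fun hex => hx ((CpAux.bridge p).mpr hex)⟩)
    obtain ⟨h8, hx⟩ := h'
    exact ⟨CpAux.backward_two p h8, CpAux.backward_three p hp3,
      CpAux.backward_p p hp2 hp3 ((CpAux.Deq (CpAux.cast18_ne_zero hp2 hp3)).mpr hx)⟩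
end

section
/- Let p be a prime with p ≠ 2 and p ≠ 3. Then the equation w² = 3p + 6pz⁴ has solutions z, w in each of the fields ℚ₂, ℚ₃ and ℚ_p if and only if one of the following holds: p ≡ 11 or 19 (mod 24); or p ≡ 1 or 17 (mod 24) and 2 is a fourth power modulo p. -/
lemma norm_sq_ne_odd {q : ℕ} [Fact q.Prime] (w : ℚ_[q]) {e : ℤ} (he : Odd e) :
    ‖w‖ ^ 2 ≠ (q : ℝ) ^ e := by
  have hq1 : (1 : ℝ) < q := by exact_mod_cast (Fact.out : q.Prime).one_lt
  have hq0 : (0 : ℝ) < q := by linarith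
  rcases eq_or_ne w 0 with rfl | hw
  · simp only [norm_zero, ne_eq, zero_pow]
    intro h
    exact (zpow_ne_zero e (ne_of_gt hq0)) (by linarith : (q:ℝ) ^ e = 0)
  · rw [Padic.norm_eq_zpow_neg_valuation hw, ← zpow_natCast ((q:ℝ) ^ (-w.valuation)) 2, ← zpow_mul]
    intro h
    have h2 := (zpow_right_inj₀ hq0 (ne_of_gt hq1)).mp h
    rcases he with ⟨k, hk⟩
    omega


lemma int_norm_one {q : ℕ} [Fact q.Prime] {k : ℤ} (h : ¬((q:ℤ) ∣ k)) : ‖(k : ℚ_[q])‖ = 1 :=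
  le_antisymm (Padic.norm_int_le_one k)
    (not_lt.mp fun hl => h ((Padic.norm_intCast_lt_one_iff (k := k)).mp hl))

lemma int_norm_one' {q : ℕ} [Fact q.Prime] {k : ℤ} (h : ¬((q:ℤ) ∣ k)) : ‖(k : ℤ_[q])‖ = 1 :=
  le_antisymm (PadicInt.norm_le_one _)
    (not_lt.mp fun hl => h ((PadicInt.norm_int_lt_one_iff_dvd k).mp hl))

lemma hensel_quartic {q : ℕ} [Fact q.Prime] (c a : ℤ_[q])
    (h1 : ‖2 * a ^ 4 - c‖ < ‖8 * a ^ 3‖ ^ 2) : ∃ z : ℤ_[q], 2 * z ^ 4 = c := by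
  set F : Polynomial ℤ_[q] := Polynomial.C 2 * Polynomial.X ^ 4 - Polynomial.C c with hFdef
  have hF : F.eval a = 2 * a ^ 4 - c := by simp [hFdef]
  have hF' : F.derivative.eval a = 8 * a ^ 3 := by
    simp [hFdef]; ring
  obtain ⟨z, hz, -⟩ := hensels_lemma (F := F) (a := a) (by rw [Polynomial.coe_aeval_eq_eval]; rw [hF, hF']; exact h1)
  refine ⟨z, ?_⟩
  have : 2 * z ^ 4 - c = 0 := by simpa [hFdef] using hz
  exact sub_eq_zero.mp this

lemma hensel_sqrt {q : ℕ} [Fact q.Prime] (c a : ℤ_[q])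
    (h1 : ‖a ^ 2 - c‖ < ‖2 * a‖ ^ 2) : ∃ s : ℤ_[q], s ^ 2 = c := by
  set F : Polynomial ℤ_[q] := Polynomial.X ^ 2 - Polynomial.C c with hFdef
  have hF : F.eval a = a ^ 2 - c := by simp [hFdef]
  have hF' : F.derivative.eval a = 2 * a := by
    simp [hFdef]; exact Or.inl one_add_one_eq_two
  obtain ⟨z, hz, -⟩ := hensels_lemma (F := F) (a := a) (by rw [Polynomial.coe_aeval_eq_eval]; rw [hF, hF']; exact h1)
  refine ⟨z, ?_⟩
  have : z ^ 2 - c = 0 := by simpa [hFdef] using hz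
  exact sub_eq_zero.mp this

@[simp, norm_cast] lemma padic_coe_ofNat {q : ℕ} [Fact q.Prime] (n : ℕ) [n.AtLeastTwo] :
    ((OfNat.ofNat n : ℤ_[q]) : ℚ_[q]) = OfNat.ofNat n := rfl

lemma hensel_quartic_one {q : ℕ} [Fact q.Prime] (c : ℤ_[q]) (k : ℤ)
    (hk : ((k : ℤ_[q])) = 2 - c) (hdvd : (q:ℤ) ∣ k) (h8 : ¬((q:ℤ) ∣ 8)) :
    ∃ z : ℤ_[q], 2 * z ^ 4 = c := by
  apply hensel_quartic c 1
  have e1 : (2 * 1 ^ 4 - c : ℤ_[q]) = (k : ℤ_[q]) := by rw [hk]; ring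
  have e2 : (8 * 1 ^ 3 : ℤ_[q]) = ((8:ℤ) : ℤ_[q]) := by norm_num
  rw [e1, e2, int_norm_one' h8]
  have := (PadicInt.norm_int_lt_one_iff_dvd (p := q) k).mpr hdvd
  simpa using this

lemma hensel_sqrt_one_odd {q : ℕ} [Fact q.Prime] (c : ℤ_[q]) (k : ℤ)
    (hk : ((k : ℤ_[q])) = 1 - c) (hdvd : (q:ℤ) ∣ k) (h2 : ¬((q:ℤ) ∣ 2)) :
    ∃ s : ℤ_[q], s ^ 2 = c := by
  apply hensel_sqrt c 1
  have e1 : (1 ^ 2 - c : ℤ_[q]) = (k : ℤ_[q]) := by rw [hk]; ring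
  have e2 : (2 * 1 : ℤ_[q]) = ((2:ℤ) : ℤ_[q]) := by norm_num
  rw [e1, e2, int_norm_one' h2]
  have := (PadicInt.norm_int_lt_one_iff_dvd (p := q) k).mpr hdvd
  simpa using this

lemma sol3 (p : ℕ) [Fact p.Prime] (hp3 : p ≠ 3) :
    ∃ z w : ℚ_[3], w ^ 2 = 3 * (p : ℚ_[3]) + 6 * (p : ℚ_[3]) * z ^ 4 := by
  have hp : p.Prime := Fact.out
  have h3 : ¬ (3 ∣ p) := fun h => hp3 ((Nat.Prime.eq_one_or_self_of_dvd hp 3 h).resolve_left (by norm_num)).symm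
  have hmod : p % 3 = 1 ∨ p % 3 = 2 := by omega
  rcases hmod with hm | hm
  · obtain ⟨t, ht⟩ := hensel_quartic_one (q := 3) 26 (-24) (by norm_num) (by norm_num) (by norm_num)
    obtain ⟨s, hs⟩ := hensel_sqrt_one_odd (q := 3) (p : ℤ_[3]) (1 - p)
      (by push_cast; ring) (by omega) (by norm_num)
    refine ⟨(t : ℚ_[3]), 9 * (s : ℚ_[3]), ?_⟩
    have key : (9 * s) ^ 2 = 3 * (p:ℤ_[3]) + 6 * (p:ℤ_[3]) * t ^ 4 := by
      linear_combination (81 : ℤ_[3]) * hs - 3 * (p : ℤ_[3]) * ht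
    have key' := congrArg (fun x : ℤ_[3] => (x : ℚ_[3])) key
    push_cast at key'
    exact key'
  · obtain ⟨t, ht⟩ := hensel_quartic_one (q := 3) 53 (-51) (by norm_num) (by norm_num) (by norm_num)
    obtain ⟨s, hs⟩ := hensel_sqrt_one_odd (q := 3) (2 * p : ℤ_[3]) (1 - 2 * p)
      (by push_cast; ring) (by omega) (by norm_num)
    refine ⟨(t : ℚ_[3]), 9 * (s : ℚ_[3]), ?_⟩
    have key : (9 * s) ^ 2 = 3 * (p:ℤ_[3]) + 6 * (p:ℤ_[3]) * t ^ 4 := by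
      linear_combination (81 : ℤ_[3]) * hs - 3 * (p : ℤ_[3]) * ht
    have key' := congrArg (fun x : ℤ_[3] => (x : ℚ_[3])) key
    push_cast at key'
    exact key'


lemma hensel_sqrt_one_two (c : ℤ_[2]) (k : ℤ) (hk : ((k : ℤ_[2])) = 1 - c) (hdvd : 8 ∣ k) :
    ∃ s : ℤ_[2], s ^ 2 = c := by
  apply hensel_sqrt c 1
  have e1 : (1 ^ 2 - c : ℤ_[2]) = (k : ℤ_[2]) := by rw [hk]; ring
  have h2 : ‖(2 : ℤ_[2])‖ = 2⁻¹ := by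
    have := PadicInt.norm_p (p := 2)
    norm_num at this ⊢
    exact_mod_cast this
  have h8 : ‖(8 : ℤ_[2])‖ = 8⁻¹ := by
    have : (8 : ℤ_[2]) = 2 ^ 3 := by norm_num
    rw [this, norm_pow, h2]
    norm_num
  obtain ⟨m, rfl⟩ := hdvd
  have hkn : ‖((8 * m : ℤ) : ℤ_[2])‖ ≤ 8⁻¹ := by
    push_cast
    rw [norm_mul, h8]
    calc 8⁻¹ * ‖(m : ℤ_[2])‖ ≤ 8⁻¹ * 1 := by
          gcongr
          exact PadicInt.norm_le_one _
      _ = 8⁻¹ := by norm_num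
  rw [e1]
  have e2 : (2 * 1 : ℤ_[2]) = 2 := by norm_num
  rw [e2, h2]
  calc ‖((8 * m : ℤ) : ℤ_[2])‖ ≤ 8⁻¹ := hkn
    _ < 2⁻¹ ^ 2 := by norm_num


lemma sol2 (p : ℕ) [Fact p.Prime] (hp2 : p ≠ 2) :
    (∃ z w : ℚ_[2], w ^ 2 = 3 * (p : ℚ_[2]) + 6 * (p : ℚ_[2]) * z ^ 4) ↔
      (p % 8 = 1 ∨ p % 8 = 3) := by
  have hp : p.Prime := Fact.out
  have hodd : p % 2 = 1 := Nat.odd_iff.mp (hp.odd_of_ne_two hp2)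
  constructor
  · rintro ⟨z, w, h⟩
    by_contra hcon
    push_neg at hcon
    have h16 : p % 16 = 5 ∨ p % 16 = 7 ∨ p % 16 = 13 ∨ p % 16 = 15 := by omega
    have h3p : ¬ ((2:ℤ) ∣ (3 * p : ℤ)) := by omega
    have hn3p : ‖(3 * (p:ℚ_[2]))‖ = 1 := by
      have := int_norm_one (q := 2) h3p
      push_cast at this
      exact this
    have h' : w ^ 2 = 3 * (p:ℚ_[2]) * (1 + 2 * z ^ 4) := by rw [h]; ring
    by_cases hz : ‖z‖ ≤ 1
    · -- z is a 2-adic integer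
      have hz4 : ‖(2:ℚ_[2]) * z ^ 4‖ ≤ 2⁻¹ := by
        rw [norm_mul, norm_pow]
        have h2 : ‖(2:ℚ_[2])‖ = 2⁻¹ := by
          have := Padic.norm_p (p := 2)
          norm_num at this ⊢
          exact_mod_cast this
        rw [h2]
        calc 2⁻¹ * ‖z‖ ^ 4 ≤ 2⁻¹ * 1 := by
              gcongr
              exact pow_le_one₀ (norm_nonneg z) hz
          _ = 2⁻¹ := by norm_num
      have hne : ‖(1:ℚ_[2])‖ ≠ ‖(2:ℚ_[2]) * z ^ 4‖ := by
        rw [norm_one]; intro hq; rw [← hq] at hz4; norm_num at hz4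
      have hu : ‖(1:ℚ_[2]) + 2 * z ^ 4‖ = 1 := by
        rw [Padic.add_eq_max_of_ne hne, norm_one]
        rw [max_eq_left]
        linarith
      have hw1 : ‖w‖ = 1 := by
        have hwsq : ‖w‖ ^ 2 = 1 := by
          rw [← norm_pow, h', norm_mul, hn3p, hu]; norm_num
        have h0 := norm_nonneg w
        nlinarith [hwsq]
      have hwle : ‖w‖ ≤ 1 := le_of_eq hw1
      set z' : ℤ_[2] := ⟨z, hz⟩ with hz'
      set w' : ℤ_[2] := ⟨w, hwle⟩ with hw'
      have heq : w' ^ 2 = 3 * (p : ℤ_[2]) + 6 * (p : ℤ_[2]) * z' ^ 4 := by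
        apply Subtype.coe_injective
        push_cast
        exact h
      have hmap := congrArg (PadicInt.toZModPow (p := 2) 4) heq
      simp only [map_pow, map_add, map_mul, map_natCast, map_ofNat] at hmap
      have hpc : ((p : ZMod (2^4))) = ((p % 16 : ℕ) : ZMod (2^4)) := by
        have h0 := ZMod.natCast_mod p (2^4)
        rw [show p % 2^4 = p % 16 by norm_num] at h0
        exact h0.symm
      have dec : ∀ c W Z : ZMod (2^4), (c = 5 ∨ c = 7 ∨ c = 13 ∨ c = 15) →
          W ^ 2 ≠ 3 * c + 6 * c * Z ^ 4 := by decide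
      apply dec _ _ _ _ hmap
      rw [hpc]
      rcases h16 with h | h | h | h <;> rw [h] <;> norm_num
    · -- |z| > 1
      push_neg at hz
      have hz0 : z ≠ 0 := by
        intro h0; rw [h0, norm_zero] at hz; linarith
      have h2 : ‖(2:ℚ_[2])‖ = 2⁻¹ := by
        have := Padic.norm_p (p := 2)
        norm_num at this ⊢
        exact_mod_cast this
      have hzn : ‖z‖ = (2:ℝ) ^ (-z.valuation) := by
        have := Padic.norm_eq_zpow_neg_valuation hz0
        exact_mod_cast this
      have hge : (2:ℝ) ≤ ‖z‖ := by
        rw [hzn]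
        have hv : 1 ≤ -z.valuation := by
          by_contra hlt
          push_neg at hlt
          have : -z.valuation ≤ 0 := by omega
          have : (2:ℝ) ^ (-z.valuation) ≤ 1 := by
            apply zpow_le_one_of_nonpos₀ (by norm_num) this
          rw [hzn] at hz; linarith
        calc (2:ℝ) = 2 ^ (1:ℤ) := by norm_num
          _ ≤ 2 ^ (-z.valuation) := by
            apply zpow_le_zpow_right₀ (by norm_num) hv
      have h2z4 : ‖(2:ℚ_[2]) * z ^ 4‖ = (2:ℝ) ^ (-1 - 4 * z.valuation) := by
        rw [norm_mul, norm_pow, h2, hzn]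
        rw [← zpow_natCast ((2:ℝ) ^ (-z.valuation)) 4, ← zpow_mul]
        rw [show (2⁻¹ : ℝ) = (2:ℝ) ^ (-1 : ℤ) by norm_num]
        rw [← zpow_add₀ (by norm_num : (2:ℝ) ≠ 0)]
        ring_nf
      have hbig : (1:ℝ) < ‖(2:ℚ_[2]) * z ^ 4‖ := by
        rw [norm_mul, norm_pow, h2]
        have h4 : (16:ℝ) ≤ ‖z‖ ^ 4 := by
          calc (16:ℝ) = 2 ^ 4 := by norm_num
            _ ≤ ‖z‖ ^ 4 := by gcongr <;> norm_num
        linarith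
      have hne : ‖(1:ℚ_[2])‖ ≠ ‖(2:ℚ_[2]) * z ^ 4‖ := by
        rw [norm_one]; linarith
      have hu : ‖(1:ℚ_[2]) + 2 * z ^ 4‖ = ‖(2:ℚ_[2]) * z ^ 4‖ := by
        rw [Padic.add_eq_max_of_ne hne, norm_one, max_eq_right (le_of_lt hbig)]
      have hwsq : ‖w‖ ^ 2 = (2:ℝ) ^ (-1 - 4 * z.valuation) := by
        rw [← norm_pow, h', norm_mul, hn3p, hu, h2z4]; norm_num
      exact norm_sq_ne_odd (q := 2) w (⟨-1 - 2*z.valuation, by ring⟩ : Odd (-1 - 4*z.valuation))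
        (by push_cast; exact hwsq)
  · rintro (hm | hm)
    · obtain ⟨s, hs⟩ := hensel_sqrt_one_two ((p:ℕ) : ℤ_[2]) (1 - p) (by push_cast; ring) (by omega)
      refine ⟨1, 3 * (s : ℚ_[2]), ?_⟩
      have key : (3 * s) ^ 2 = 3 * (p:ℤ_[2]) + 6 * (p:ℤ_[2]) * 1 ^ 4 := by
        linear_combination (9 : ℤ_[2]) * hs
      have key' := congrArg (fun x : ℤ_[2] => (x : ℚ_[2])) key
      push_cast at key'
      exact key'
    · obtain ⟨s, hs⟩ := hensel_sqrt_one_two ((3 * p : ℕ) : ℤ_[2]) (1 - 3 * p)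
        (by push_cast; ring) (by omega)
      refine ⟨0, (s : ℚ_[2]), ?_⟩
      have key : s ^ 2 = 3 * (p:ℤ_[2]) + 6 * (p:ℤ_[2]) * 0 ^ 4 := by
        push_cast at hs
        linear_combination hs
      have key' := congrArg (fun x : ℤ_[2] => (x : ℚ_[2])) key
      push_cast at key'
      exact key'


lemma nat_dvd_of_cast {p k : ℕ} (hp : p.Prime) (hk : k.Prime) (h : (p:ℤ) ∣ (k:ℤ)) : p = k :=
  (Nat.prime_dvd_prime_iff_eq hp hk).mp (Int.natCast_dvd_natCast.mp h)

lemma solp (p : ℕ) [Fact p.Prime] (hp2 : p ≠ 2) (hp3 : p ≠ 3) :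
    (∃ z w : ℚ_[p], w ^ 2 = 3 * (p : ℚ_[p]) + 6 * (p : ℚ_[p]) * z ^ 4) ↔
      (∃ x : ZMod p, 1 + 2 * x ^ 4 = 0) := by
  have hp : p.Prime := Fact.out
  have hd2 : ¬ ((p:ℤ) ∣ 2) := fun h => hp2 (nat_dvd_of_cast hp (by norm_num) (by exact_mod_cast h))
  have hd3 : ¬ ((p:ℤ) ∣ 3) := fun h => hp3 (nat_dvd_of_cast hp (by norm_num) (by exact_mod_cast h))
  have hd8 : ¬ ((p:ℤ) ∣ 8) := by
    intro h
    have h8 : (p:ℤ) ∣ (2:ℤ) ^ 3 := by norm_num at h ⊢; exact_mod_cast h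
    exact hd2 (Int.Prime.dvd_pow' (by exact_mod_cast hp) h8)
  have hn2 : ‖(2:ℚ_[p])‖ = 1 := by
    have := int_norm_one (q := p) hd2; push_cast at this; exact this
  have hn3 : ‖(3:ℚ_[p])‖ = 1 := by
    have := int_norm_one (q := p) hd3; push_cast at this; exact this
  have hnp : ‖(p:ℚ_[p])‖ = (p:ℝ) ^ (-1 : ℤ) := by
    rw [Padic.norm_p]
    norm_num
  constructor
  · rintro ⟨z, w, h⟩
    have h' : w ^ 2 = 3 * (p:ℚ_[p]) * (1 + 2 * z ^ 4) := by rw [h]; ring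
    by_cases hz : ‖z‖ ≤ 1
    · set z' : ℤ_[p] := ⟨z, hz⟩ with hz'
      by_cases hu : PadicInt.toZMod (1 + 2 * z' ^ 4) = 0
      · refine ⟨PadicInt.toZMod z', ?_⟩
        simpa only [map_add, map_mul, map_pow, map_one, map_ofNat] using hu
      · exfalso
        have hunorm : ‖(1 + 2 * z' ^ 4 : ℤ_[p])‖ = 1 := by
          apply le_antisymm (PadicInt.norm_le_one _)
          by_contra hlt
          push_neg at hlt
          have hdvd := (PadicInt.norm_lt_one_iff_dvd _).mp hlt
          apply hu
          rw [← RingHom.mem_ker, PadicInt.ker_toZMod, PadicInt.maximalIdeal_eq_span_p,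
            Ideal.mem_span_singleton]
          exact hdvd
        have hunorm' : ‖(1:ℚ_[p]) + 2 * z ^ 4‖ = 1 := by
          have : ((1 + 2 * z' ^ 4 : ℤ_[p]) : ℚ_[p]) = 1 + 2 * z ^ 4 := by push_cast; rfl
          rw [← this]
          exact hunorm
        have hwsq : ‖w‖ ^ 2 = (p:ℝ) ^ (-1 : ℤ) := by
          rw [← norm_pow, h', norm_mul, norm_mul, hn3, hnp, hunorm']
          ring
        exact norm_sq_ne_odd (q := p) w ⟨-1, by ring⟩ hwsq
    · exfalso
      push_neg at hz
      have hz0 : z ≠ 0 := by intro h0; rw [h0, norm_zero] at hz; linarith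
      have hzn : ‖z‖ = (p:ℝ) ^ (-z.valuation) := Padic.norm_eq_zpow_neg_valuation hz0
      have hu : ‖(1:ℚ_[p]) + 2 * z ^ 4‖ = ‖z‖ ^ 4 := by
        have hbig : (1:ℝ) < ‖(2:ℚ_[p]) * z ^ 4‖ := by
          rw [norm_mul, norm_pow, hn2, one_mul]
          calc (1:ℝ) = 1 ^ 4 := by norm_num
            _ < ‖z‖ ^ 4 := by
              gcongr <;> first | exact hz | norm_num
        have hne : ‖(1:ℚ_[p])‖ ≠ ‖(2:ℚ_[p]) * z ^ 4‖ := by rw [norm_one]; linarith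
        rw [Padic.add_eq_max_of_ne hne, norm_one, max_eq_right (le_of_lt hbig),
          norm_mul, norm_pow, hn2, one_mul]
      have hwsq : ‖w‖ ^ 2 = (p:ℝ) ^ (-1 - 4 * z.valuation) := by
        rw [← norm_pow, h', norm_mul, norm_mul, hn3, hnp, hu, hzn,
          ← zpow_natCast ((p:ℝ) ^ (-z.valuation)) 4, ← zpow_mul, one_mul,
          ← zpow_add₀ (by exact_mod_cast hp.pos.ne' : (p:ℝ) ≠ 0)]
        congr 1
        push_cast
        ring
      exact norm_sq_ne_odd (q := p) w
        (⟨-1 - 2 * z.valuation, by ring⟩ : Odd (-1 - 4 * z.valuation)) hwsq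
  · rintro ⟨x, hx⟩
    have hx0 : x ≠ 0 := by
      intro h0
      rw [h0] at hx
      norm_num at hx
    set a : ℤ_[p] := ((x.val : ℕ) : ℤ_[p]) with ha
    have hdvd : (p:ℤ) ∣ (2 * (x.val:ℤ) ^ 4 + 1 - 3 * p) := by
      have h1 : ((1 + 2 * (x.val:ℤ) ^ 4 : ℤ) : ZMod p) = 0 := by
        push_cast
        rw [ZMod.natCast_zmod_val]
        linear_combination hx
      obtain ⟨c, hc⟩ := (ZMod.intCast_zmod_eq_zero_iff_dvd _ p).mp h1
      exact ⟨c - 3, by linarith⟩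
    have hvne : ¬ ((p:ℤ) ∣ ((x.val : ℤ))) := by
      rw [Int.natCast_dvd_natCast]
      intro hd
      have hlt : x.val < p := ZMod.val_lt x
      have hne0 : x.val ≠ 0 := fun h0 => hx0 ((ZMod.val_eq_zero x).mp h0)
      have := Nat.le_of_dvd (Nat.pos_of_ne_zero hne0) hd
      omega
    have hna : ‖a‖ = 1 := by
      have hcast : a = (((x.val : ℤ)) : ℤ_[p]) := by rw [ha]; push_cast; rfl
      rw [hcast]
      exact int_norm_one' hvne
    have h8n : ‖(8:ℤ_[p])‖ = 1 := by
      have := int_norm_one' (q := p) hd8; push_cast at this; exact this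
    have hcond : ‖2 * a ^ 4 - ((3 * (p:ℤ) - 1 : ℤ) : ℤ_[p])‖ < ‖8 * a ^ 3‖ ^ 2 := by
      have e1 : 2 * a ^ 4 - ((3 * (p:ℤ) - 1 : ℤ) : ℤ_[p])
          = ((2 * (x.val:ℤ) ^ 4 + 1 - 3 * p : ℤ) : ℤ_[p]) := by
        rw [ha]; push_cast; ring
      rw [e1, norm_mul, norm_pow, hna, h8n]
      have := (PadicInt.norm_int_lt_one_iff_dvd _).mpr hdvd
      simpa using this
    obtain ⟨t, ht⟩ := hensel_quartic ((3 * (p:ℤ) - 1 : ℤ) : ℤ_[p]) a hcond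
    refine ⟨(t : ℚ_[p]), 3 * (p : ℚ_[p]), ?_⟩
    have key : (3 * (p:ℤ_[p])) ^ 2 = 3 * (p:ℤ_[p]) + 6 * (p:ℤ_[p]) * t ^ 4 := by
      have ht' : 2 * t ^ 4 = 3 * (p:ℤ_[p]) - 1 := by
        rw [ht]; push_cast; ring
      linear_combination (-3) * (p:ℤ_[p]) * ht'
    have key' := congrArg (fun y : ℤ_[p] => (y : ℚ_[p])) key
    push_cast at key'
    exact key'


lemma two_ne_zero_zmod (p : ℕ) [Fact p.Prime] (hp2 : p ≠ 2) : (2 : ZMod p) ≠ 0 := by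
  intro h
  have h2 : ((2:ℕ) : ZMod p) = 0 := by exact_mod_cast h
  have := (ZMod.natCast_eq_zero_iff 2 p).mp h2
  have hp : p.Prime := Fact.out
  exact hp2 ((Nat.prime_dvd_prime_iff_eq hp Nat.prime_two).mp this)

lemma sub1 (p : ℕ) [Fact p.Prime] (hp2 : p ≠ 2) (hm : p % 8 = 3) :
    ∃ x : ZMod p, 1 + 2 * x ^ 4 = 0 := by
  have h2ne := two_ne_zero_zmod p hp2
  obtain ⟨s, hs⟩ := (ZMod.exists_sq_eq_neg_two_iff hp2).mpr (Or.inr hm)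
  have hs0 : s ≠ 0 := by
    intro h0; rw [h0, mul_zero] at hs
    apply h2ne
    linear_combination -hs
  refine ⟨(s⁻¹) ^ ((p + 1) / 4), ?_⟩
  have h4 : (p + 1) / 4 * 4 = p + 1 := by omega
  have hpow : ((s⁻¹) ^ ((p + 1) / 4)) ^ 4 = (s ^ (p + 1))⁻¹ := by
    rw [← pow_mul, h4, inv_pow]
  have hsp : s ^ (p + 1) = -2 := by
    have hsplit : p + 1 = 2 + (p - 1) := by omega
    rw [hsplit, pow_add, ZMod.pow_card_sub_one_eq_one hs0, mul_one, sq, ← hs]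
  rw [hpow, hsp]
  rw [inv_neg]
  field_simp
  ring
lemma sub2 (p : ℕ) [Fact p.Prime] (hp2 : p ≠ 2) (hm : p % 8 = 1) :
    (∃ x : ZMod p, 1 + 2 * x ^ 4 = 0) ↔ (∃ y : ZMod p, y ^ 4 = 2) := by
  have h2ne := two_ne_zero_zmod p hp2
  obtain ⟨i, hi⟩ := ZMod.exists_sq_eq_neg_one_iff.mpr (by omega : p % 4 ≠ 3)
  have hi' : i * i = -1 := hi.symm
  have hi0 : i ≠ 0 := by
    intro h0; rw [h0, mul_zero] at hi'
    have : (1 : ZMod p) = 0 := by linear_combination hi'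
    exact one_ne_zero this
  have hisq : IsSquare i := by
    rw [ZMod.euler_criterion p hi0]
    have hdiv : p / 2 = 4 * (p / 8) := by omega
    rw [hdiv, pow_mul]
    have : i ^ 4 = 1 := by
      have : i ^ 4 = (i * i) * (i * i) := by ring
      rw [this, hi']; ring
    rw [this, one_pow]
  obtain ⟨j, hj⟩ := hisq
  have hj4 : j ^ 4 = -1 := by
    have : j ^ 4 = (j * j) * (j * j) := by ring
    rw [this, ← hj, hi']
  constructor
  · rintro ⟨x, hx⟩
    refine ⟨(j * x)⁻¹, ?_⟩
    rw [inv_pow]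
    apply inv_eq_of_mul_eq_one_right
    linear_combination 2 * x ^ 4 * hj4 - hx
  · rintro ⟨y, hy⟩
    have hy0 : y ≠ 0 := by
      intro h0; rw [h0] at hy; apply h2ne; rw [← hy]; ring
    refine ⟨j * y⁻¹, ?_⟩
    have hyi : (y⁻¹) ^ 4 = 2⁻¹ := by rw [inv_pow, hy]
    have : (j * y⁻¹) ^ 4 = j ^ 4 * (y⁻¹) ^ 4 := by ring
    rw [this, hj4, hyi]
    field_simp
    ring
lemma conv_int (p : ℕ) [Fact p.Prime] :
    (∃ x : ℤ, x ^ 4 ≡ 2 [ZMOD (p : ℤ)]) ↔ (∃ y : ZMod p, y ^ 4 = 2) := by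
  constructor
  · rintro ⟨x, hx⟩
    refine ⟨(x : ZMod p), ?_⟩
    have := (ZMod.intCast_eq_intCast_iff _ _ _).mpr hx
    push_cast at this
    exact this
  · rintro ⟨y, hy⟩
    refine ⟨(y.val : ℤ), ?_⟩
    apply (ZMod.intCast_eq_intCast_iff _ _ _).mp
    push_cast
    rw [ZMod.natCast_zmod_val]
    exact hy


lemma arith_equiv (p : ℕ) [Fact p.Prime] (hp2 : p ≠ 2) (hp3 : p ≠ 3) :
    ((p % 8 = 1 ∨ p % 8 = 3) ∧ (∃ x : ZMod p, 1 + 2 * x ^ 4 = 0)) ↔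
      ((p % 24 = 11 ∨ p % 24 = 19) ∨
        ((p % 24 = 1 ∨ p % 24 = 17) ∧ ∃ x : ℤ, x ^ 4 ≡ 2 [ZMOD (p : ℤ)])) := by
  have hp : p.Prime := Fact.out
  have h3 : ¬ (3 ∣ p) := fun h => hp3 ((Nat.prime_dvd_prime_iff_eq Nat.prime_three hp).mp h).symm
  constructor
  · rintro ⟨h8 | h8, hQ⟩
    · right
      exact ⟨by omega, (conv_int p).mpr ((sub2 p hp2 h8).mp hQ)⟩
    · left; omega
  · rintro (h | ⟨h24, hx⟩)
    · have h8 : p % 8 = 3 := by omega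
      exact ⟨Or.inr h8, sub1 p hp2 h8⟩
    · have h8 : p % 8 = 1 := by omega
      exact ⟨Or.inl h8, (sub2 p hp2 h8).mpr ((conv_int p).mp hx)⟩

theorem C3p_locally_solvable_iff (p : ℕ) [Fact p.Prime] (hp2 : p ≠ 2) (hp3 : p ≠ 3) :
    ((∃ z w : ℚ_[2], w ^ 2 = 3 * (p : ℚ_[2]) + 6 * (p : ℚ_[2]) * z ^ 4) ∧
      (∃ z w : ℚ_[3], w ^ 2 = 3 * (p : ℚ_[3]) + 6 * (p : ℚ_[3]) * z ^ 4) ∧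
      (∃ z w : ℚ_[p], w ^ 2 = 3 * (p : ℚ_[p]) + 6 * (p : ℚ_[p]) * z ^ 4)) ↔
      ((p % 24 = 11 ∨ p % 24 = 19) ∨
        ((p % 24 = 1 ∨ p % 24 = 17) ∧ ∃ x : ℤ, x ^ 4 ≡ 2 [ZMOD (p : ℤ)])) := by
  constructor
  · rintro ⟨h2, _h3, hpp⟩
    exact (arith_equiv p hp2 hp3).mp ⟨(sol2 p hp2).mp h2, (solp p hp2 hp3).mp hpp⟩
  · intro hR
    obtain ⟨h8, hQ⟩ := (arith_equiv p hp2 hp3).mpr hR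
    exact ⟨(sol2 p hp2).mpr h8, sol3 p hp3, (solp p hp2 hp3).mpr hQ⟩
end
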